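/- arXiv:2510.10869 — 7 statements merged into one kernel-verified Lean document; each statement's English description precedes it below -/
import Mathlib

section
/- For every integer n > 2 and every subset S of F_2^n, the number of distinct Hamming distances spanned by pairs of points of S is at least log|S| / (2 log n). -/
open Finset Submodule

section AuxSpan

variable {R : Type*} [CommRing R] {A : Type*} [CommRing A] [Algebra R A]

/-- A product of `#s` elements, each lying in the span of `Set.range g`, lies in the span of
the set of products of `#s` values of `g`. -/
lemma aux_prod_mem_span {ι κ : Type*} [Nonempty κ] (g : κ → A) (s : Finset ι)
    (a : ι → A) (ha : ∀ j ∈ s, a j ∈ span R (Set.range g)) :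
    (∏ j ∈ s, a j) ∈ span R (Set.range fun h : ι → κ => ∏ j ∈ s, g (h j)) := by
  classical
  revert ha
  induction s using Finset.induction_on with
  | empty =>
      intro _
      rw [Finset.prod_empty]
      exact subset_span ⟨fun _ => Classical.arbitrary κ, by simp⟩
  | @insert x t hx ih =>
      intro ha
      rw [Finset.prod_insert hx]
      have h1 : a x ∈ span R (Set.range g) := ha x (Finset.mem_insert_self _ _)
      have h2 := ih (fun j hj => ha j (Finset.mem_insert_of_mem hj))
      have h3 := Submodule.mul_mem_mul h1 h2
      rw [Submodule.span_mul_span] at h3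
      refine Submodule.span_mono ?_ h3
      intro z hz
      rw [Set.mem_mul] at hz
      obtain ⟨u, hu, v, hv, rfl⟩ := hz
      obtain ⟨o, rfl⟩ := hu
      obtain ⟨h, rfl⟩ := hv
      refine ⟨Function.update h x o, ?_⟩
      show (∏ j ∈ insert x t, g (Function.update h x o j)) = g o * ∏ j ∈ t, g (h j)
      rw [Finset.prod_insert hx, Function.update_self]
      refine congrArg _ (Finset.prod_congr rfl fun j hj => ?_)
      rw [Function.update_of_ne (ne_of_mem_of_not_mem hj hx)]

end AuxSpan

/-- For every integer `n > 2` and every `S ⊆ 𝔽₂ⁿ`, the number of distinct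
Hamming distances spanned by pairs of points of `S` is at least `log |S| / (2 log n)`. -/
theorem stmt0 (n : ℕ) (hn : 2 < n) (S : Finset (Fin n → ZMod 2)) :
    Real.logb 2 S.card / (2 * Real.logb 2 n) ≤
      (((S ×ˢ S).image fun p => hammingDist p.1 p.2).card : ℝ) := by
  classical
  rcases S.eq_empty_or_nonempty with rfl | hSne
  · simp
  obtain ⟨x₀, hx₀⟩ := hSne
  set Δ : Finset ℕ := (S ×ˢ S).image fun p => hammingDist p.1 p.2 with hΔ
  set Δ' : Finset ℕ := Δ.erase 0 with hΔ'
  -- 0 ∈ Δ, so Δ.card ≥ 1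
  have h0Δ : 0 ∈ Δ := by
    rw [hΔ]
    exact Finset.mem_image.mpr ⟨(x₀, x₀), Finset.mem_product.mpr ⟨hx₀, hx₀⟩,
      hammingDist_self x₀⟩
  have hDpos : 1 ≤ Δ.card := Finset.card_pos.mpr ⟨0, h0Δ⟩
  have hk : Δ'.card ≤ Δ.card := Finset.card_erase_le
  -- key combinatorial bound : |S| ≤ (n+1) ^ Δ'.card
  have hcard : S.card ≤ (n + 1) ^ Δ'.card := by
    -- the generating functions
    set g : Option (Fin n) → ((Fin n → ZMod 2) → ℝ) :=
      fun o x => match o with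
        | none => 1
        | some i => if x i = 1 then 1 else 0 with hg
    have hzmod : ∀ a : ZMod 2, a = 0 ∨ a = 1 := by decide
    -- the polynomials
    set f : (Fin n → ZMod 2) → ((Fin n → ZMod 2) → ℝ) := fun y x => ∏ d ∈ Δ', ((hammingDist x y : ℝ) - (d : ℝ)) with hf
    -- each factor is in the span of range g
    have hfactor : ∀ (y : (Fin n → ZMod 2)) (d : ℕ),
        (fun x : (Fin n → ZMod 2) => ((hammingDist x y : ℝ) - (d : ℝ))) ∈ span ℝ (Set.range g) := by
      intro y d
      have he : ∀ i : Fin n,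
          (fun x : (Fin n → ZMod 2) => if x i ≠ y i then (1 : ℝ) else 0) ∈ span ℝ (Set.range g) := by
        intro i
        rcases hzmod (y i) with h | h
        · have heq : (fun x : (Fin n → ZMod 2) => if x i ≠ y i then (1 : ℝ) else 0) = g (some i) := by
            funext x
            rcases hzmod (x i) with hx | hx <;> simp [hg, h, hx]
          rw [heq]
          exact subset_span ⟨some i, rfl⟩
        · have heq : (fun x : (Fin n → ZMod 2) => if x i ≠ y i then (1 : ℝ) else 0)
              = g none - g (some i) := by
            funext x
            rcases hzmod (x i) with hx | hx <;> simp [hg, h, hx]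
          rw [heq]
          exact sub_mem (subset_span ⟨none, rfl⟩) (subset_span ⟨some i, rfl⟩)
      have heq : (fun x : (Fin n → ZMod 2) => ((hammingDist x y : ℝ) - (d : ℝ)))
          = (∑ i : Fin n, fun x : (Fin n → ZMod 2) => if x i ≠ y i then (1 : ℝ) else 0)
            - (d : ℝ) • g none := by
        funext x
        have : hammingDist x y = ∑ i : Fin n, if x i ≠ y i then 1 else 0 := by
          rw [hammingDist, Finset.card_filter]
        simp only [Finset.sum_apply, Pi.sub_apply, Pi.smul_apply, smul_eq_mul, hg]
        rw [this]
        push_cast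
        ring
      rw [heq]
      exact sub_mem (sum_mem fun i _ => he i)
        (smul_mem _ _ (subset_span ⟨none, rfl⟩))
    -- the span of the (n+1)^k products
    set F : (↥Δ' → Option (Fin n)) → ((Fin n → ZMod 2) → ℝ) :=
      fun c => ∏ d : ↥Δ', g (c d) with hF
    set W : Submodule ℝ ((Fin n → ZMod 2) → ℝ) := span ℝ (Set.range F) with hW
    have hmem : ∀ y : (Fin n → ZMod 2), f y ∈ W := by
      intro y
      have h1 : f y = ∏ d ∈ Δ', (fun x : (Fin n → ZMod 2) => ((hammingDist x y : ℝ) - (d : ℝ))) := by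
        funext x
        rw [hf]
        simp [Finset.prod_apply]
      rw [h1]
      have h2 := aux_prod_mem_span (R := ℝ) g Δ'
        (fun d => (fun x : (Fin n → ZMod 2) => ((hammingDist x y : ℝ) - (d : ℝ))))
        (fun d _ => hfactor y d)
      refine Submodule.span_mono ?_ h2
      rintro z ⟨h, rfl⟩
      refine ⟨fun d => h d.1, ?_⟩
      show (∏ d : ↥Δ', g (h d.1)) = ∏ j ∈ Δ', g (h j)
      exact Finset.prod_coe_sort Δ' (fun d => g (h d))
    -- linear independence of the f y, y ∈ S
    have hli : LinearIndependent ℝ (fun y : ↥S => f y) := by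
      rw [Fintype.linearIndependent_iff]
      intro c hc y₀
      have hev := congrFun hc (y₀ : (Fin n → ZMod 2))
      simp only [Finset.sum_apply, Pi.smul_apply, smul_eq_mul, Pi.zero_apply] at hev
      have hzero : ∀ y : ↥S, y ≠ y₀ → c y * f y (y₀ : (Fin n → ZMod 2)) = 0 := by
        intro y hy
        have hne : (y₀ : (Fin n → ZMod 2)) ≠ (y : (Fin n → ZMod 2)) := by
          intro h
          exact hy (Subtype.ext h.symm)
        have hdmem : hammingDist (y₀ : (Fin n → ZMod 2)) (y : (Fin n → ZMod 2)) ∈ Δ' := by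
          rw [hΔ']
          refine Finset.mem_erase.mpr ⟨hammingDist_ne_zero.mpr hne, ?_⟩
          rw [hΔ]
          exact Finset.mem_image.mpr ⟨((y₀ : (Fin n → ZMod 2)), (y : (Fin n → ZMod 2))),
            Finset.mem_product.mpr ⟨y₀.2, y.2⟩, rfl⟩
        have : f y (y₀ : (Fin n → ZMod 2)) = 0 := by
          rw [hf]
          exact Finset.prod_eq_zero hdmem (by simp)
        rw [this, mul_zero]
      have hsum : ∑ y : ↥S, c y * f y (y₀ : (Fin n → ZMod 2)) = c y₀ * f y₀ (y₀ : (Fin n → ZMod 2)) :=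
        Fintype.sum_eq_single y₀ hzero ▸ rfl
      have hfne : f y₀ (y₀ : (Fin n → ZMod 2)) ≠ 0 := by
        rw [hf]
        refine Finset.prod_ne_zero_iff.mpr fun d hd => ?_
        have hd0 : d ≠ 0 := (Finset.mem_erase.mp hd).1
        rw [hammingDist_self]
        simp only [Nat.cast_zero, zero_sub, ne_eq, neg_eq_zero, Nat.cast_eq_zero]
        exact hd0
      have := hsum ▸ hev
      exact (mul_eq_zero.mp this).resolve_right hfne
    -- finish the counting
    have hWfin : FiniteDimensional ℝ ↥W :=
      FiniteDimensional.span_of_finite ℝ (Set.finite_range F)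
    have hliW : LinearIndependent ℝ (fun y : ↥S => (⟨f y, hmem y⟩ : ↥W)) := by
      apply LinearIndependent.of_comp W.subtype
      exact hli
    have h1 : Fintype.card ↥S ≤ Module.finrank ℝ ↥W :=
      hliW.fintype_card_le_finrank
    have h2 : Module.finrank ℝ ↥W ≤ Fintype.card (↥Δ' → Option (Fin n)) :=
      finrank_range_le_card F
    have h3 : Fintype.card (↥Δ' → Option (Fin n)) = (n + 1) ^ Δ'.card := by
      rw [Fintype.card_fun, Fintype.card_option, Fintype.card_fin, Fintype.card_coe]
    calc S.card = Fintype.card ↥S := (Fintype.card_coe S).symm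
      _ ≤ Module.finrank ℝ ↥W := h1
      _ ≤ Fintype.card (↥Δ' → Option (Fin n)) := h2
      _ = (n + 1) ^ Δ'.card := h3
  -- now |S| ≤ n ^ (2 Δ.card)
  have hnat : S.card ≤ n ^ (2 * Δ.card) := by
    calc S.card ≤ (n + 1) ^ Δ'.card := hcard
      _ ≤ (n ^ 2) ^ Δ'.card := Nat.pow_le_pow_left (by nlinarith) _
      _ = n ^ (2 * Δ'.card) := by rw [← pow_mul]
      _ ≤ n ^ (2 * Δ.card) := Nat.pow_le_pow_right (by omega) (by omega)
  -- real arithmetic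
  have hlogn : 0 < Real.logb 2 (n : ℝ) :=
    Real.logb_pos (by norm_num) (by exact_mod_cast (by omega : 1 < n))
  have hSpos : (0 : ℝ) < S.card := by
    exact_mod_cast Finset.card_pos.mpr ⟨x₀, hx₀⟩
  have hlog : Real.logb 2 S.card ≤ (2 * Δ.card) * Real.logb 2 (n : ℝ) := by
    have h1 : Real.logb 2 (S.card : ℝ) ≤ Real.logb 2 ((n : ℝ) ^ (2 * Δ.card)) := by
      apply Real.logb_le_logb_of_le (by norm_num) hSpos
      exact_mod_cast hnat
    rw [Real.logb_pow] at h1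
    push_cast at h1 ⊢
    linarith
  rw [div_le_iff₀ (by positivity)]
  calc Real.logb 2 S.card ≤ (2 * Δ.card) * Real.logb 2 (n : ℝ) := hlog
    _ = (Δ.card : ℝ) * (2 * Real.logb 2 (n : ℝ)) := by ring
end

section
/- For every integer q ≥ 2, every integer n ≥ 1, and every subset S of [q]^n, the number of distinct Hamming distances spanned by S is at least log|S| / (2 log(2nq)). -/
open Finset

section aux

variable {q n : ℕ}

private lemma hamming_sum_eq (x y : Fin n → Fin q) :
    (hammingDist x y : ℝ) + ∑ j, (if x j = y j then (1:ℝ) else 0) = n := by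
  classical
  have h1 : (∑ j, if x j = y j then (1:ℝ) else 0)
      = ((univ.filter fun j => x j = y j).card : ℝ) := by
    rw [Finset.sum_boole]
  have h2 : hammingDist x y = (univ.filter fun j => ¬ (x j = y j)).card := rfl
  have h3 := Finset.card_filter_add_card_filter_not
    (s := (univ : Finset (Fin n))) (p := fun j => x j = y j)
  rw [Finset.card_univ, Fintype.card_fin] at h3
  rw [h1, h2]
  rw [add_comm]
  exact_mod_cast congrArg (Nat.cast (R := ℝ)) h3

private lemma card_le_pow (S : Finset (Fin n → Fin q)) (hS : S.Nonempty) :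
    S.card ≤ (n * q + 1) ^ (((S ×ˢ S).image fun p => hammingDist p.1 p.2).card - 1) := by
  classical
  set Δ := (S ×ˢ S).image fun p => hammingDist p.1 p.2 with hΔdef
  set Δ' := Δ.erase 0 with hΔ'def
  -- the polynomial-like functions
  set U := Option (Fin n × Fin q) with hU
  let b : U → (Fin n → Fin q) → ℝ := fun u x =>
    match u with
    | none => 1
    | some (j, a) => if x j = a then 1 else 0
  let c : (Fin n → Fin q) → ℕ → U → ℝ := fun y d u =>
    match u with
    | none => (d : ℝ) - n
    | some (j, a) => if y j = a then 1 else 0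
  let f : (Fin n → Fin q) → (Fin n → Fin q) → ℝ := fun y x =>
    ∏ d ∈ Δ', ((d : ℝ) - hammingDist x y)
  -- factor expansion
  have factor : ∀ (y x : Fin n → Fin q) (d : ℕ),
      (d : ℝ) - hammingDist x y = ∑ u : U, c y d u * b u x := by
    intro y x d
    rw [Fintype.sum_option]
    have : ∑ u : Fin n × Fin q, c y d (some u) * b (some u) x
        = ∑ j, (if x j = y j then (1:ℝ) else 0) := by
      rw [Fintype.sum_prod_type]
      refine Finset.sum_congr rfl fun j _ => ?_
      simp only [c, b]
      rw [Finset.sum_eq_single (y j)]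
      · simp [eq_comm]
      · intro a _ ha; simp [Ne.symm ha, ha]
      · simp
    rw [this]
    have := hamming_sum_eq x y
    simp only [c, b, mul_one]
    linarith
  -- monomials
  let m : ({d // d ∈ Δ'} → U) → (Fin n → Fin q) → ℝ := fun σ x =>
    ∏ d ∈ Δ'.attach, b (σ d) x
  -- each f y lies in the span of monomials
  have mem_span : ∀ y : Fin n → Fin q,
      f y ∈ Submodule.span ℝ (Set.range m) := by
    intro y
    have expand : f y = ∑ p ∈ Δ'.pi (fun _ => (univ : Finset U)),
        (∏ z ∈ Δ'.attach, c y z.1 (p z.1 z.2)) • m (fun d => p d.1 d.2) := by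
      funext x
      have h1 : f y x = ∏ d ∈ Δ', ∑ u ∈ (univ : Finset U), c y d u * b u x := by
        simp only [f]
        exact Finset.prod_congr rfl fun d _ => factor y x d
      rw [h1, Finset.prod_sum]
      rw [Finset.sum_apply]
      refine Finset.sum_congr rfl fun p _ => ?_
      rw [Pi.smul_apply, smul_eq_mul]
      simp only [m]
      rw [← Finset.prod_mul_distrib]
    rw [expand]
    exact Submodule.sum_mem _ fun p _ => Submodule.smul_mem _ _
      (Submodule.subset_span ⟨_, rfl⟩)
  -- f y vanishes on other elements of S and not at y
  have f_self : ∀ y ∈ S, f y y ≠ 0 := by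
    intro y _
    simp only [f, hammingDist_self, Nat.cast_zero, sub_zero]
    rw [Finset.prod_ne_zero_iff]
    intro d hd
    have : d ≠ 0 := (Finset.mem_erase.mp hd).1
    exact_mod_cast this
  have f_other : ∀ y ∈ S, ∀ z ∈ S, z ≠ y → f y z = 0 := by
    intro y hy z hz hzy
    have hd : hammingDist z y ∈ Δ' := by
      rw [hΔ'def, Finset.mem_erase]
      constructor
      · simpa [hammingDist_eq_zero] using hzy
      · rw [hΔdef]
        exact Finset.mem_image.mpr ⟨(z, y), Finset.mem_product.mpr ⟨hz, hy⟩, rfl⟩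
    exact Finset.prod_eq_zero hd (by simp)
  -- linear independence
  let W := Submodule.span ℝ (Set.range m)
  let v : {y // y ∈ S} → W := fun y => ⟨f y, mem_span y⟩
  have hv : LinearIndependent ℝ v := by
    have : LinearIndependent ℝ (fun y : {y // y ∈ S} => f y) := by
      rw [Fintype.linearIndependent_iff]
      intro g hg y
      have := congrFun hg y.1
      rw [Finset.sum_apply] at this
      simp only [Pi.smul_apply, smul_eq_mul, Pi.zero_apply] at this
      rw [Finset.sum_eq_single y] at this
      · rcases mul_eq_zero.mp this with h | h
        · exact h
        · exact absurd h (f_self y.1 y.2)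
      · intro z _ hzy
        rw [f_other z.1 z.2 y.1 y.2 (fun h => hzy (Subtype.ext h.symm)), mul_zero]
      · intro h; exact absurd (Finset.mem_univ y) h
    exact this.of_comp W.subtype
  have hdim : S.card ≤ Fintype.card ({d // d ∈ Δ'} → U) := by
    have h1 : Fintype.card {y // y ∈ S} ≤ Module.finrank ℝ W :=
      hv.fintype_card_le_finrank
    have h2 : Module.finrank ℝ W ≤ Fintype.card ({d // d ∈ Δ'} → U) :=
      finrank_range_le_card m
    rw [Fintype.card_coe] at h1
    exact h1.trans h2
  have hcardU : Fintype.card U = n * q + 1 := by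
    simp only [hU]
    rw [Fintype.card_option, Fintype.card_prod, Fintype.card_fin, Fintype.card_fin]
  have hcardΔ' : Δ'.card = Δ.card - 1 := by
    rw [hΔ'def]
    apply Finset.card_erase_of_mem
    obtain ⟨y, hy⟩ := hS
    rw [hΔdef]
    exact Finset.mem_image.mpr ⟨(y, y), Finset.mem_product.mpr ⟨hy, hy⟩, hammingDist_self y⟩
  calc S.card ≤ Fintype.card ({d // d ∈ Δ'} → U) := hdim
    _ = (n * q + 1) ^ (Δ.card - 1) := by
        rw [Fintype.card_fun, hcardU, Fintype.card_coe, hcardΔ']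

end aux

/-- For every `q ≥ 2`, `n ≥ 1`, and `S ⊆ [q]ⁿ`, the number of distinct
Hamming distances spanned by `S` is at least `log |S| / (2 log (2 n q))`. -/
theorem stmt1 (q n : ℕ) (hq : 2 ≤ q) (hn : 1 ≤ n) (S : Finset (Fin n → Fin q)) :
    Real.logb 2 S.card / (2 * Real.logb 2 (2 * n * q)) ≤
      (((S ×ˢ S).image fun p => hammingDist p.1 p.2).card : ℝ) := by
  rcases S.eq_empty_or_nonempty with rfl | hS
  · simp [Real.logb_zero]
  · set Δ := (S ×ˢ S).image fun p => hammingDist p.1 p.2 with hΔdef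
    set D := Δ.card with hD
    have hcard := card_le_pow S hS
    have hnq : 2 ≤ n * q := le_trans hq (Nat.le_mul_of_pos_left q hn)
    have hb1 : (1:ℝ) < 2 * n * q := by
      have : (4:ℝ) ≤ 2 * n * q := by
        have : (2:ℝ) ≤ (n*q : ℕ) := by exact_mod_cast hnq
        push_cast at this ⊢
        nlinarith
      linarith
    have hlogb_pos : (0:ℝ) < Real.logb 2 (2 * n * q) :=
      Real.logb_pos one_lt_two hb1
    have hden : (0:ℝ) < 2 * Real.logb 2 (2 * n * q) := by linarith
    rw [div_le_iff₀ hden]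
    have hS1 : (1:ℝ) ≤ S.card := by exact_mod_cast hS.card_pos
    have step1 : Real.logb 2 S.card ≤ Real.logb 2 (((n * q + 1) ^ (D - 1) : ℕ) : ℝ) := by
      apply Real.logb_le_logb_of_le one_lt_two (by linarith)
      exact_mod_cast hcard
    have step2 : Real.logb 2 (((n * q + 1) ^ (D - 1) : ℕ) : ℝ)
        = (D - 1 : ℕ) * Real.logb 2 ((n * q + 1 : ℕ) : ℝ) := by
      push_cast
      rw [Real.logb_pow]
    have step3 : Real.logb 2 ((n * q + 1 : ℕ) : ℝ) ≤ 2 * Real.logb 2 (2 * n * q) := by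
      have h2 : ((n * q + 1 : ℕ) : ℝ) ≤ (2 * n * q) ^ 2 := by
        have h3 : (2:ℝ) ≤ (n*q : ℕ) := by exact_mod_cast hnq
        push_cast at h3 ⊢
        nlinarith
      calc Real.logb 2 ((n * q + 1 : ℕ) : ℝ) ≤ Real.logb 2 ((2 * n * q) ^ 2) := by
            apply Real.logb_le_logb_of_le one_lt_two (by positivity) h2
        _ = 2 * Real.logb 2 (2 * n * q) := by rw [Real.logb_pow]; norm_num
    have hD1 : ((D - 1 : ℕ) : ℝ) ≤ (D : ℝ) := by exact_mod_cast Nat.sub_le D 1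
    calc Real.logb 2 S.card ≤ (D - 1 : ℕ) * Real.logb 2 ((n * q + 1 : ℕ) : ℝ) := by
          rw [← step2]; exact step1
      _ ≤ (D - 1 : ℕ) * (2 * Real.logb 2 (2 * n * q)) := by
          apply mul_le_mul_of_nonneg_left step3 (by positivity)
      _ ≤ (D : ℝ) * (2 * Real.logb 2 (2 * n * q)) := by
          apply mul_le_mul_of_nonneg_right hD1 (le_of_lt hden)
end

section
/- For any prime power q, any constant k, and any n ≥ k, there exists a set S ⊆ F_q^n with |S| = Θ((n/k)^k) such that S spans at most k distinct nonzero Hamming distances. -/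
/-- For any prime power `q` and constant `k ≥ 1`, there is `c > 0` such
that for every `n ≥ k` there exists `S ⊆ 𝔽_qⁿ` with `|S| ≥ c (n/k)^k` spanning at
most `k` distinct nonzero Hamming distances. -/
theorem stmt6 (q k : ℕ) (hq : IsPrimePow q) (hk : 1 ≤ k) :
    ∃ c : ℝ, 0 < c ∧ ∀ n, k ≤ n → ∃ S : Finset (Fin n → Fin q),
      c * ((n : ℝ) / k) ^ k ≤ (S.card : ℝ) ∧
      ((((S ×ˢ S).image fun p => hammingDist p.1 p.2)) \ {0}).card ≤ k := by
  classical
  have hq2 : 2 ≤ q := hq.two_le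
  haveI : NeZero q := ⟨by omega⟩
  refine ⟨(1/2)^k, by positivity, fun n hn => ?_⟩
  set m := n / k with hm
  have hk0 : 0 < k := hk
  have hm1 : 1 ≤ m := (Nat.one_le_div_iff hk0).2 hn
  have hmk : m * k ≤ n := Nat.div_mul_le_self n k
  -- encoding of block positions
  have henc : ∀ (i : Fin k) (p : Fin m), m * i.val + p.val < n := by
    intro i p
    have h1 : m * (i.val + 1) ≤ m * k := Nat.mul_le_mul_left m i.isLt
    have h2 : m * (i.val + 1) = m * i.val + m := Nat.mul_succ m i.val
    omega
  set enc : Fin k → Fin m → Fin n := fun i p => ⟨m * i.val + p.val, henc i p⟩ with henc_def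
  have enc_inj : ∀ i p i' p', enc i p = enc i' p' → i = i' ∧ p = p' := by
    intro i p i' p' h
    have h' : m * i.val + p.val = m * i'.val + p'.val := congrArg Fin.val h
    have h1 : (m * i.val + p.val) / m = i.val := by
      rw [Nat.mul_add_div (by omega), Nat.div_eq_of_lt p.isLt]; omega
    have h2 : (m * i'.val + p'.val) / m = i'.val := by
      rw [Nat.mul_add_div (by omega), Nat.div_eq_of_lt p'.isLt]; omega
    have hi : i = i' := Fin.ext (by rw [← h1, ← h2, h'])
    refine ⟨hi, Fin.ext ?_⟩
    subst hi
    omega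
  set supp : (Fin k → Fin m) → Finset (Fin n) :=
    fun a => Finset.image (fun i => enc i (a i)) Finset.univ with hsupp
  have supp_card : ∀ a, (supp a).card = k := by
    intro a
    rw [hsupp]
    rw [Finset.card_image_of_injective _ (fun i i' h => (enc_inj _ _ _ _ h).1)]
    simp
  set f : (Fin k → Fin m) → (Fin n → Fin q) :=
    fun a j => if j ∈ supp a then 1 else 0 with hf
  have h10 : (1 : Fin q) ≠ 0 := by
    intro h
    have := congrArg Fin.val h
    rw [Fin.val_one', Nat.mod_eq_of_lt (by omega)] at this
    simp at this
  have mem_supp : ∀ a j, j ∈ supp a ↔ f a j ≠ 0 := by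
    intro a j
    rw [hf]
    by_cases h : j ∈ supp a <;> simp [h, h10]
  have f_inj : Function.Injective f := by
    intro a b hab
    have hsab : supp a = supp b := by
      ext j; rw [mem_supp, mem_supp, hab]
    funext i
    have : enc i (a i) ∈ supp b := by
      rw [← hsab, hsupp]; exact Finset.mem_image_of_mem _ (Finset.mem_univ i)
    rw [hsupp] at this
    obtain ⟨i', -, hi'⟩ := Finset.mem_image.1 this
    have h1 := (enc_inj _ _ _ _ hi').1
    have h2 := (enc_inj _ _ _ _ hi').2
    subst h1
    exact h2.symm
  -- Hamming distance formula
  have hdist : ∀ a b, hammingDist (f a) (f b) =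
      (supp a \ supp b).card + (supp b \ supp a).card := by
    intro a b
    have : ({j | f a j ≠ f b j} : Finset (Fin n)) =
        (supp a \ supp b) ∪ (supp b \ supp a) := by
      ext j
      simp only [Finset.mem_filter, Finset.mem_univ, true_and, Finset.mem_union,
        Finset.mem_sdiff]
      rw [hf]
      by_cases ha : j ∈ supp a <;> by_cases hb : j ∈ supp b <;>
        simp [ha, hb, h10, h10.symm]
    rw [hammingDist, this, Finset.card_union_of_disjoint]
    exact disjoint_sdiff_sdiff
  have hdist_form : ∀ a b, ∃ c ≤ k, hammingDist (f a) (f b) = 2 * (k - c) := by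
    intro a b
    refine ⟨(supp a ∩ supp b).card, ?_, ?_⟩
    · calc (supp a ∩ supp b).card ≤ (supp a).card :=
        Finset.card_le_card Finset.inter_subset_left
      _ = k := supp_card a
    · have h1 : (supp a \ supp b).card + (supp a ∩ supp b).card = (supp a).card :=
        Finset.card_sdiff_add_card_inter _ _
      have h2 : (supp b \ supp a).card + (supp b ∩ supp a).card = (supp b).card :=
        Finset.card_sdiff_add_card_inter _ _
      rw [Finset.inter_comm] at h2
      rw [hdist a b]
      have ha := supp_card a
      have hb := supp_card b
      omega
  refine ⟨Finset.image f Finset.univ, ?_, ?_⟩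
  · -- size
    have hcard : (Finset.image f Finset.univ).card = m ^ k := by
      rw [Finset.card_image_of_injective _ f_inj, Finset.card_univ]
      simp [Fintype.card_fun]
    rw [hcard]
    have hn2 : n ≤ 2 * (k * m) := by
      have h1 : k * (n / k) + n % k = n := Nat.div_add_mod n k
      have h2 : n % k < k := Nat.mod_lt _ hk0
      have h3 : k * 1 ≤ k * m := Nat.mul_le_mul_left k hm1
      rw [← hm] at h1
      omega
    have hle : (n : ℝ) / k / 2 ≤ (m : ℝ) := by
      rw [div_le_iff₀ (by norm_num), div_le_iff₀ (by positivity : (0:ℝ) < (k:ℝ))]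
      have h4 : (n : ℝ) ≤ 2 * ((k:ℝ) * (m:ℝ)) := by
        have := (Nat.cast_le (α := ℝ)).2 hn2
        push_cast at this
        linarith [this]
      nlinarith [h4]
    have heq : (1/2 : ℝ)^k * ((n:ℝ)/k)^k = ((n:ℝ)/k/2)^k := by
      rw [← mul_pow]; ring_nf
    rw [heq]
    have := pow_le_pow_left₀ (by positivity : (0:ℝ) ≤ (n:ℝ)/k/2) hle k
    push_cast
    linarith [this]
  · -- few distances
    have hsub : ((Finset.image f Finset.univ ×ˢ Finset.image f Finset.univ).image
          fun p => hammingDist p.1 p.2) \ {0} ⊆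
        Finset.image (fun t => 2 * t) (Finset.Icc 1 k) := by
      intro d hd
      rw [Finset.mem_sdiff, Finset.mem_singleton] at hd
      obtain ⟨hd1, hd0⟩ := hd
      obtain ⟨⟨x, y⟩, hxy, hdeq⟩ := Finset.mem_image.1 hd1
      rw [Finset.mem_product] at hxy
      obtain ⟨a, -, ha⟩ := Finset.mem_image.1 hxy.1
      obtain ⟨b, -, hb⟩ := Finset.mem_image.1 hxy.2
      obtain ⟨c, hck, hc⟩ := hdist_form a b
      rw [Finset.mem_image]
      refine ⟨k - c, ?_, ?_⟩
      · rw [Finset.mem_Icc]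
        constructor
        · by_contra h
          apply hd0
          rw [← hdeq, ← ha, ← hb, hc]; omega
        · omega
      · rw [← hdeq, ← ha, ← hb, hc]
    calc (((Finset.image f Finset.univ ×ˢ Finset.image f Finset.univ).image
          fun p => hammingDist p.1 p.2) \ {0}).card
        ≤ (Finset.image (fun t => 2 * t) (Finset.Icc 1 k)).card :=
          Finset.card_le_card hsub
      _ ≤ (Finset.Icc 1 k).card := Finset.card_image_le
      _ = k := by simp
end

section
/- For each n ≥ 2, the set A = {a_1,...,a_{n+1}} ⊆ [n+1]^n (where (a_i)_j = i - j if j ≤ i and 0 otherwise) contains no rainbow subset of size 3: every subset R ⊆ A in which all pairwise Hamming distances are distinct has |R| ≤ 2. -/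
/-- The staircase vector `a_i ∈ [n+1]^n`. -/
def staircase (n i : ℕ) : Fin n → Fin (n + 1) :=
  fun j => if (j : ℕ) + 1 ≤ i then Fin.ofNat (n + 1) (i - ((j : ℕ) + 1) : ℕ) else 0

/-- A set is rainbow if all pairwise Hamming distances among distinct points are
distinct: equal distances can only come from the same unordered pair. -/
def IsRainbow {α : Type*} [DecidableEq α] {n : ℕ} (R : Finset (Fin n → α)) : Prop :=
  ∀ x ∈ R, ∀ y ∈ R, ∀ u ∈ R, ∀ v ∈ R, x ≠ y → u ≠ v →
    hammingDist x y = hammingDist u v → ({x, y} : Finset (Fin n → α)) = {u, v}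

lemma staircase_val (n m : ℕ) (hm : m ≤ n + 1) (j : Fin n) :
    (staircase n m j : ℕ) = if (j : ℕ) + 1 ≤ m then m - ((j : ℕ) + 1) else 0 := by
  unfold staircase
  split_ifs with h
  · exact Nat.mod_eq_of_lt (by omega)
  · rfl

lemma staircase_ne_iff (n i k : ℕ) (hi : 1 ≤ i) (hik : i < k) (hk : k ≤ n + 1)
    (j : Fin n) : staircase n i j ≠ staircase n k j ↔ (j : ℕ) + 1 < k := by
  rw [Ne, Fin.ext_iff, staircase_val n i (by omega) j, staircase_val n k hk j]
  split_ifs <;> omega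

lemma staircase_dist (n i k : ℕ) (hi : 1 ≤ i) (hik : i < k) (hk : k ≤ n + 1) :
    hammingDist (staircase n i) (staircase n k) =
      (Finset.univ.filter (fun j : Fin n => (j : ℕ) + 1 < k)).card := by
  unfold hammingDist
  congr 1
  apply Finset.filter_congr
  intro j _
  simpa using staircase_ne_iff n i k hi hik hk j

lemma staircase_inj (n : ℕ) (hn : 1 ≤ n) {i k : ℕ}
    (hi : i ∈ Finset.Icc 1 (n + 1)) (hk : k ∈ Finset.Icc 1 (n + 1))
    (h : staircase n i = staircase n k) : i = k := by
  simp only [Finset.mem_Icc] at hi hk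
  have h0 := congrFun h ⟨0, by omega⟩
  unfold staircase at h0
  simp only at h0
  rw [if_pos (by omega), if_pos (by omega)] at h0
  have := congrArg Fin.val h0
  simp only [Fin.val_ofNat] at this
  rw [Nat.mod_eq_of_lt (by omega), Nat.mod_eq_of_lt (by omega)] at this
  omega

/-- For two smaller indices `i ≠ i'` and a common larger index `k`, the rainbow
condition fails. -/
lemma staircase_aux (n : ℕ) (hn : 2 ≤ n) (R : Finset (Fin n → Fin (n + 1)))
    (hR : IsRainbow R) {i i' k : ℕ}
    (hi : i ∈ Finset.Icc 1 (n + 1)) (hi' : i' ∈ Finset.Icc 1 (n + 1))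
    (hk : k ∈ Finset.Icc 1 (n + 1))
    (hik : i < k) (hi'k : i' < k) (hii' : i ≠ i')
    (hiR : staircase n i ∈ R) (hi'R : staircase n i' ∈ R)
    (hkR : staircase n k ∈ R) : False := by
  simp only [Finset.mem_Icc] at hi hi' hk
  have hIc : i ∈ Finset.Icc 1 (n + 1) := by simp [Finset.mem_Icc]; omega
  have hIc' : i' ∈ Finset.Icc 1 (n + 1) := by simp [Finset.mem_Icc]; omega
  have hKc : k ∈ Finset.Icc 1 (n + 1) := by simp [Finset.mem_Icc]; omega
  have hne1 : staircase n i ≠ staircase n k := fun h =>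
    absurd (staircase_inj n (by omega) hIc hKc h) (by omega)
  have hne2 : staircase n i' ≠ staircase n k := fun h =>
    absurd (staircase_inj n (by omega) hIc' hKc h) (by omega)
  have hne3 : staircase n i ≠ staircase n i' := fun h =>
    absurd (staircase_inj n (by omega) hIc hIc' h) hii'
  have hd : hammingDist (staircase n i) (staircase n k) =
      hammingDist (staircase n i') (staircase n k) := by
    rw [staircase_dist n i k hi.1 hik hk.2, staircase_dist n i' k hi'.1 hi'k hk.2]
  have := hR _ hiR _ hkR _ hi'R _ hkR hne1 hne2 hd
  have hmem : staircase n i ∈ ({staircase n i', staircase n k} :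
      Finset (Fin n → Fin (n + 1))) := by
    rw [← this]; simp
  simp only [Finset.mem_insert, Finset.mem_singleton] at hmem
  rcases hmem with h | h
  · exact hne3 h
  · exact hne1 h

/-- for `n ≥ 2`, the set `A = {a_1, …, a_{n+1}}` contains no rainbow
subset of size 3: every rainbow `R ⊆ A` has `|R| ≤ 2`. -/
theorem stmt11 (n : ℕ) (hn : 2 ≤ n)
    (R : Finset (Fin n → Fin (n + 1)))
    (hRA : R ⊆ (Finset.Icc 1 (n + 1)).image (staircase n))
    (hR : IsRainbow R) :
    R.card ≤ 2 := by
  by_contra h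
  push_neg at h
  obtain ⟨x, y, z, hx, hy, hz, hxy, hxz, hyz⟩ := Finset.two_lt_card_iff.mp h
  obtain ⟨i₁, hi₁, hx'⟩ := Finset.mem_image.mp (hRA hx)
  obtain ⟨i₂, hi₂, hy'⟩ := Finset.mem_image.mp (hRA hy)
  obtain ⟨i₃, hi₃, hz'⟩ := Finset.mem_image.mp (hRA hz)
  subst hx' hy' hz'
  have h12 : i₁ ≠ i₂ := fun h => hxy (by rw [h])
  have h13 : i₁ ≠ i₃ := fun h => hxz (by rw [h])
  have h23 : i₂ ≠ i₃ := fun h => hyz (by rw [h])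
  rcases lt_trichotomy i₁ i₂ with h1 | h1 | h1
  · rcases lt_trichotomy i₂ i₃ with h2 | h2 | h2
    · exact staircase_aux n hn R hR hi₁ hi₂ hi₃ (by omega) h2 h12 hx hy hz
    · omega
    · exact staircase_aux n hn R hR hi₁ hi₃ hi₂ h1 h2 h13 hx hz hy
  · omega
  · rcases lt_trichotomy i₁ i₃ with h2 | h2 | h2
    · exact staircase_aux n hn R hR hi₂ hi₁ hi₃ (by omega) h2 (Ne.symm h12) hy hx hz
    · omega
    · exact staircase_aux n hn R hR hi₂ hi₃ hi₁ h1 h2 h23 hy hz hx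
end

section
/- For every ε > 0 and all sufficiently large n, there exists a rainbow set R ⊆ F_2^n of size at least (1/√2 − ε)√n, i.e., a set in which all pairwise Hamming distances are distinct. -/
open Finset

/-- Bose–Chowla: a Sidon set of size `q` in `ZMod (q^2 - 1)` for `q` prime. -/
lemma exists_sidon (q N : ℕ) [hq : Fact q.Prime] (hN : N = q ^ 2 - 1) :
    ∃ S : Finset (ZMod N), S.card = q ∧
      ∀ a ∈ S, ∀ b ∈ S, ∀ c ∈ S, ∀ d ∈ S, a + b = c + d →
        (a = c ∧ b = d) ∨ (a = d ∧ b = c) := by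
  classical
  have hq2 : 2 ≤ q := hq.out.two_le
  have hN3 : 3 ≤ N := by
    have : 4 ≤ q ^ 2 := by nlinarith
    omega
  haveI : NeZero N := ⟨by omega⟩
  set K := GaloisField q 2 with hK
  haveI : Fintype K := Fintype.ofFinite K
  have hcardK : Nat.card K = q ^ 2 := GaloisField.card q 2 (by norm_num)
  obtain ⟨θ, hθ⟩ := IsCyclic.exists_generator (α := Kˣ)
  have horder : orderOf θ = N := by
    rw [orderOf_eq_card_of_forall_mem_zpowers hθ, Nat.card_units, hcardK, hN]
  -- the exponential map
  set e : ZMod N → Kˣ := fun a => θ ^ a.val with he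
  have e_add : ∀ a b : ZMod N, e (a + b) = e a * e b := by
    intro a b
    have h2 := pow_mod_orderOf θ (a.val + b.val)
    rw [horder] at h2
    simp only [he]
    rw [ZMod.val_add, h2, pow_add]
  have e_inj : Function.Injective e := by
    intro a b hab
    have h2 := pow_eq_pow_iff_modEq.mp hab
    rw [horder] at h2
    have ha := ZMod.val_lt a
    have hb := ZMod.val_lt b
    unfold Nat.ModEq at h2
    rw [Nat.mod_eq_of_lt ha, Nat.mod_eq_of_lt hb] at h2
    exact ZMod.val_injective N h2
  have e_surj : Function.Surjective e := by
    intro u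
    obtain ⟨z, hz⟩ := hθ u
    refine ⟨(z : ZMod N), ?_⟩
    have hzval : (((z : ZMod N)).val : ℤ) = z % (N : ℤ) := ZMod.val_intCast z
    have h3 := zpow_mod_orderOf θ z
    rw [horder] at h3
    have key : θ ^ ((((z : ZMod N)).val : ℕ) : ℤ) = θ ^ z := by rw [hzval, h3]
    rw [zpow_natCast] at key
    simpa only [he, key] using hz
  -- θ is not in the prime field
  have theta_not : (θ : K) ∉ Set.range (algebraMap (ZMod q) K) := by
    rintro ⟨r, hr⟩
    have hr0 : r ≠ 0 := by
      rintro rfl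
      simp only [map_zero] at hr
      exact θ.ne_zero hr.symm
    have hpow : (θ : K) ^ (q - 1) = 1 := by
      rw [← hr, ← map_pow, ZMod.pow_card_sub_one_eq_one hr0, map_one]
    have hpowu : θ ^ (q - 1) = 1 := Units.ext (by push_cast [hpow]; simp)
    have hdvd : orderOf θ ∣ q - 1 := orderOf_dvd_of_pow_eq_one hpowu
    rw [horder] at hdvd
    have h5 := Nat.le_of_dvd (by omega) hdvd
    have h6 : q < q ^ 2 := by nlinarith
    omega
  -- the Bose set
  set A := algebraMap (ZMod q) K with hA
  have Ainj : Function.Injective A := (algebraMap (ZMod q) K).injective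
  have hxne : ∀ r : ZMod q, (θ : K) + A r ≠ 0 := by
    intro r hzero
    exact theta_not ⟨-r, by rw [map_neg]; linear_combination -hzero⟩
  set ur : ZMod q → Kˣ := fun r => Units.mk0 ((θ : K) + A r) (hxne r) with hur
  set g : ZMod q → ZMod N := fun r => (e_surj (ur r)).choose with hg
  have ge : ∀ r, e (g r) = ur r := fun r => (e_surj (ur r)).choose_spec
  have geK : ∀ r, ((e (g r) : Kˣ) : K) = (θ : K) + A r := by
    intro r; rw [ge r]; rfl
  have ginj : Function.Injective g := by
    intro r r' h
    have : (θ : K) + A r = (θ : K) + A r' := by rw [← geK r, ← geK r', h]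
    exact Ainj (by linear_combination this)
  refine ⟨Finset.univ.image g, ?_, ?_⟩
  · rw [Finset.card_image_of_injective _ ginj, Finset.card_univ, ZMod.card]
  · intro a ha b hb c hc d hd hadd
    simp only [Finset.mem_image, Finset.mem_univ, true_and] at ha hb hc hd
    obtain ⟨ra, rfl⟩ := ha
    obtain ⟨rb, rfl⟩ := hb
    obtain ⟨rc, rfl⟩ := hc
    obtain ⟨rd, rfl⟩ := hd
    have hkeyu : e (g ra) * e (g rb) = e (g rc) * e (g rd) := by
      rw [← e_add, ← e_add, hadd]
    have key : ((θ : K) + A ra) * ((θ : K) + A rb)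
        = ((θ : K) + A rc) * ((θ : K) + A rd) := by
      have := congrArg (fun u : Kˣ => (u : K)) hkeyu
      simpa only [Units.val_mul, geK] using this
    have hsum : ra + rb = rc + rd := by
      by_contra hne
      have hs0 : ra + rb - (rc + rd) ≠ 0 := fun h => hne (by linear_combination h)
      have hstep : (θ : K) * A (ra + rb - (rc + rd)) = A (rc * rd - ra * rb) := by
        simp only [map_sub, map_add, map_mul]
        linear_combination key
      have hAs : A (ra + rb - (rc + rd)) ≠ 0 := fun h => hs0 (Ainj (by rw [h, map_zero]))
      have hth : (θ : K) = A (rc * rd - ra * rb) / A (ra + rb - (rc + rd)) :=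
        (eq_div_iff hAs).mpr hstep
      rw [← map_div₀] at hth
      exact theta_not ⟨_, hth.symm⟩
    have h3 : A ra + A rb = A rc + A rd := by rw [← map_add, ← map_add, hsum]
    have h4 : A ra * A rb = A rc * A rd := by linear_combination key - (θ : K) * h3
    have hprod : ra * rb = rc * rd := Ainj (by rw [map_mul, map_mul]; exact h4)
    have hvieta : (ra - rc) * (ra - rd) = 0 := by linear_combination ra * hsum - hprod
    rcases mul_eq_zero.mp hvieta with h | h
    · have hrr : ra = rc := sub_eq_zero.mp h
      have hbb : rb = rd := by
        have := hsum; rw [hrr] at this; exact add_left_cancel this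
      exact Or.inl ⟨by rw [hrr], by rw [hbb]⟩
    · have hrr : ra = rd := sub_eq_zero.mp h
      have hbb : rb = rc := by
        have := hsum
        rw [hrr] at this
        have h7 : rd + rb = rd + rc := by linear_combination this
        exact add_left_cancel h7
      exact Or.inr ⟨by rw [hrr], by rw [hbb]⟩

/-- Arc indicator vectors: `arcVec h n a` is the indicator of the arc `[-a, -a+h)`
restricted to the window `[0,h)`, padded by zeros up to `n`. -/
def arcVec {N : ℕ} (h n : ℕ) (a : ZMod N) : Fin n → ZMod 2 := fun t =>
  if (t : ℕ) < h ∧ (a + ((t : ℕ) : ZMod N)).val < h then 1 else 0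

lemma count_aux {N h d : ℕ} (hNh : N = 2 * h) (hh : 0 < h) (hdlt : d < N) :
    (((Finset.range N)).filter (fun m => ¬(((m + d) % N < h) ↔ (m < h)))).card
      = 2 * min d (N - d) := by
  classical
  rcases le_or_gt d h with hcase | hcase
  · have hset : (Finset.range N).filter (fun m => ¬(((m + d) % N < h) ↔ (m < h)))
        = Finset.Ico (h - d) h ∪ Finset.Ico (N - d) N := by
      ext m
      simp only [Finset.mem_filter, Finset.mem_range, Finset.mem_union, Finset.mem_Ico]
      by_cases hmN : m < N
      · by_cases hw : m + d < N
        · rw [Nat.mod_eq_of_lt hw]; omega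
        · obtain ⟨j, hj⟩ : ∃ j, m + d = N + j := ⟨m + d - N, by omega⟩
          have hmod : (m + d) % N = j := by
            rw [hj, Nat.add_mod_left, Nat.mod_eq_of_lt (by omega)]
          rw [hmod]; omega
      · omega
    rw [hset, Finset.card_union_of_disjoint, Nat.card_Ico, Nat.card_Ico]
    · have hmin : min d (N - d) = d := min_eq_left (by omega)
      rw [hmin]; omega
    · rw [Finset.disjoint_left]
      intro x hx hx'
      simp only [Finset.mem_Ico] at hx hx'
      omega
  · have hset : (Finset.range N).filter (fun m => ¬(((m + d) % N < h) ↔ (m < h)))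
        = Finset.Ico 0 (N - d) ∪ Finset.Ico h (N + h - d) := by
      ext m
      simp only [Finset.mem_filter, Finset.mem_range, Finset.mem_union, Finset.mem_Ico]
      by_cases hmN : m < N
      · by_cases hw : m + d < N
        · rw [Nat.mod_eq_of_lt hw]; omega
        · obtain ⟨j, hj⟩ : ∃ j, m + d = N + j := ⟨m + d - N, by omega⟩
          have hmod : (m + d) % N = j := by
            rw [hj, Nat.add_mod_left, Nat.mod_eq_of_lt (by omega)]
          rw [hmod]; omega
      · omega
    rw [hset, Finset.card_union_of_disjoint, Nat.card_Ico, Nat.card_Ico]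
    · have hmin : min d (N - d) = N - d := min_eq_right (by omega)
      rw [hmin]; omega
    · rw [Finset.disjoint_left]
      intro x hx hx'
      simp only [Finset.mem_Ico] at hx hx'
      omega

lemma arc_dist {N h n : ℕ} (hNh : N = 2 * h) (hh : 0 < h) (hn : h ≤ n) (a b : ZMod N) :
    hammingDist (arcVec h n a) (arcVec h n b) = min ((a - b).val) (N - (a - b).val) := by
  classical
  haveI : NeZero N := ⟨by omega⟩
  obtain ⟨δ, hδ⟩ : ∃ δ, δ = a - b := ⟨a - b, rfl⟩
  obtain ⟨d, hd⟩ : ∃ d, d = δ.val := ⟨δ.val, rfl⟩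
  rw [← hδ, ← hd]
  have hdlt : d < N := hd ▸ ZMod.val_lt δ
  -- pointwise characterization
  have hpt : ∀ i : Fin n, (arcVec h n a i ≠ arcVec h n b i) ↔
      ((i : ℕ) < h ∧ ¬(((a + ((i : ℕ) : ZMod N)).val < h) ↔ ((b + ((i : ℕ) : ZMod N)).val < h))) := by
    intro i
    unfold arcVec
    by_cases hi : (i : ℕ) < h
    · by_cases h1 : (a + ((i : ℕ) : ZMod N)).val < h <;>
        by_cases h2 : (b + ((i : ℕ) : ZMod N)).val < h <;>
        simp [hi, h1, h2]
    · simp [hi]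
  set P : ℕ → Prop := fun m =>
    ¬(((a + (m : ZMod N)).val < h) ↔ ((b + (m : ZMod N)).val < h)) with hP
  -- step 1 : hammingDist is the count over the window [0,h)
  have step1 : hammingDist (arcVec h n a) (arcVec h n b) = ((range h).filter P).card := by
    rw [hammingDist]
    apply Finset.card_bij (fun (i : Fin n) _ => (i : ℕ))
    · intro i hi
      simp only [mem_filter, mem_univ, true_and] at hi
      rw [hpt i] at hi
      simp only [mem_filter, mem_range]
      exact ⟨hi.1, hi.2⟩
    · intro i _ j _ hij
      exact Fin.val_injective hij
    · intro m hm
      simp only [mem_filter, mem_range] at hm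
      refine ⟨⟨m, lt_of_lt_of_le hm.1 hn⟩, ?_, rfl⟩
      simp only [mem_filter, mem_univ, true_and]
      rw [hpt]
      exact ⟨hm.1, hm.2⟩
  -- flip lemma
  have flip : ∀ s : ZMod N, ((s + (h : ZMod N)).val < h ↔ ¬(s.val < h)) := by
    intro s
    have hs := ZMod.val_lt s
    have hval : ((h : ZMod N)).val = h := by
      rw [ZMod.val_natCast, Nat.mod_eq_of_lt (by omega)]
    rw [ZMod.val_add, hval]
    rcases lt_or_ge s.val h with hc | hc
    · rw [Nat.mod_eq_of_lt (by omega)]; omega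
    · have : (s.val + h) % N = s.val + h - N := by
        rw [Nat.mod_eq_sub_mod (by omega), Nat.mod_eq_of_lt (by omega)]
      rw [this]; omega
  have Pflip : ∀ m : ℕ, P (m + h) ↔ P m := by
    intro m
    have ha' : a + ((m + h : ℕ) : ZMod N) = (a + (m : ZMod N)) + (h : ZMod N) := by
      push_cast; ring
    have hb' : b + ((m + h : ℕ) : ZMod N) = (b + (m : ZMod N)) + (h : ZMod N) := by
      push_cast; ring
    simp only [hP, ha', hb', flip]
    tauto
  -- step 2 : doubling
  have step2 : ((range N).filter P).card = 2 * ((range h).filter P).card := by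
    have hsplit : range N = range h ∪ Ico h N := by
      rw [range_eq_Ico, range_eq_Ico]
      exact (Finset.Ico_union_Ico_eq_Ico (b := h) (c := N) (Nat.zero_le h) (by omega)).symm
    rw [hsplit, filter_union, card_union_of_disjoint, two_mul]
    · congr 1
      apply Finset.card_bij (fun m _ => m - h)
      · intro m hm
        simp only [mem_filter, mem_Ico] at hm
        simp only [mem_filter, mem_range]
        have hmm : m - h + h = m := by omega
        refine ⟨by omega, ?_⟩
        rw [← Pflip (m - h), hmm]
        exact hm.2
      · intro i hi j hj hij
        simp only [mem_filter, mem_Ico] at hi hj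
        omega
      · intro m hm
        simp only [mem_filter, mem_range] at hm
        refine ⟨m + h, ?_, by omega⟩
        simp only [mem_filter, mem_Ico]
        exact ⟨⟨by omega, by omega⟩, (Pflip m).mpr hm.2⟩
    · rw [Finset.disjoint_left]
      intro x hx hx'
      simp only [mem_filter, mem_range, mem_Ico] at hx hx'
      omega
  -- step Z1 : from ℕ window to ZMod
  have stepZ1 : ((range N).filter P).card =
      (univ.filter (fun s : ZMod N => ¬(((a + s).val < h) ↔ ((b + s).val < h)))).card := by
    apply Finset.card_bij (fun (m : ℕ) _ => ((m : ZMod N)))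
    · intro m hm
      simp only [mem_filter, mem_range] at hm
      simp only [mem_filter, mem_univ, true_and]
      exact hm.2
    · intro m hm m' hm' hmm
      simp only [mem_filter, mem_range] at hm hm'
      have := congrArg ZMod.val hmm
      rwa [ZMod.val_natCast, ZMod.val_natCast, Nat.mod_eq_of_lt hm.1,
        Nat.mod_eq_of_lt hm'.1] at this
    · intro s hs
      simp only [mem_filter, mem_univ, true_and] at hs
      refine ⟨s.val, ?_, ZMod.natCast_rightInverse s⟩
      simp only [mem_filter, mem_range]
      refine ⟨ZMod.val_lt s, ?_⟩
      show P s.val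
      simp only [hP]
      simpa only [ZMod.natCast_rightInverse s] using hs
  -- step Z2 : translation
  have stepZ2 : (univ.filter (fun s : ZMod N => ¬(((a + s).val < h) ↔ ((b + s).val < h)))).card
      = (univ.filter (fun u : ZMod N => ¬(((u + δ).val < h) ↔ (u.val < h)))).card := by
    apply Finset.card_bij (fun s _ => b + s)
    · intro s hs
      simp only [mem_filter, mem_univ, true_and] at hs ⊢
      have h1 : (b + s) + δ = a + s := by rw [hδ]; ring
      rw [h1]
      exact hs
    · intro s _ s' _ hss
      exact add_left_cancel hss
    · intro u hu
      simp only [mem_filter, mem_univ, true_and] at hu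
      refine ⟨u - b, ?_, by ring⟩
      simp only [mem_filter, mem_univ, true_and]
      have h1 : a + (u - b) = u + δ := by rw [hδ]; ring
      have h2 : b + (u - b) = u := by ring
      rw [h1, h2]
      exact hu
  -- step Z3 : back to ℕ
  have stepZ3 : (univ.filter (fun u : ZMod N => ¬(((u + δ).val < h) ↔ (u.val < h)))).card
      = ((range N).filter (fun m => ¬(((m + d) % N < h) ↔ (m < h)))).card := by
    apply Finset.card_bij (fun (u : ZMod N) _ => u.val)
    · intro u hu
      simp only [mem_filter, mem_univ, true_and] at hu
      simp only [mem_filter, mem_range]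
      refine ⟨ZMod.val_lt u, ?_⟩
      rw [hd, ← ZMod.val_add]
      exact hu
    · intro u _ u' _ huu
      exact ZMod.val_injective N huu
    · intro m hm
      simp only [mem_filter, mem_range] at hm
      refine ⟨(m : ZMod N), ?_, by rw [ZMod.val_natCast, Nat.mod_eq_of_lt hm.1]⟩
      simp only [mem_filter, mem_univ, true_and]
      rw [ZMod.val_add, ZMod.val_natCast, Nat.mod_eq_of_lt hm.1, ← hd]
      exact hm.2
  have count := count_aux hNh hh hdlt
  have final : 2 * ((range h).filter P).card = 2 * min d (N - d) := by
    rw [← step2, stepZ1, stepZ2, stepZ3, count]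
  rw [step1]
  omega

lemma exists_rainbow (q N h n : ℕ) [Fact q.Prime] (hN : N = q ^ 2 - 1)
    (hNh : N = 2 * h) (hh : 0 < h) (hn : h ≤ n) :
    ∃ R : Finset (Fin n → ZMod 2), IsRainbow R ∧ R.card = q := by
  classical
  obtain ⟨S, hScard, hsidon⟩ := exists_sidon q N hN
  haveI : NeZero N := ⟨by omega⟩
  have hinj : Function.Injective (arcVec (N := N) h n) := by
    intro x y hxy
    by_contra hne
    have hd := arc_dist hNh hh hn x y
    rw [hxy, hammingDist_self] at hd
    have h0 : x - y ≠ 0 := sub_ne_zero.mpr hne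
    have hv : (x - y).val ≠ 0 := fun hc => h0 ((ZMod.val_eq_zero _).mp hc)
    have hvlt := ZMod.val_lt (x - y)
    omega
  refine ⟨S.image (arcVec h n), ?_, ?_⟩
  swap
  · rw [Finset.card_image_of_injective _ hinj, hScard]
  · intro x hx y hy u hu v hv hxy huv hdist
    simp only [Finset.mem_image] at hx hy hu hv
    obtain ⟨a, haS, rfl⟩ := hx
    obtain ⟨b, hbS, rfl⟩ := hy
    obtain ⟨c, hcS, rfl⟩ := hu
    obtain ⟨d, hdS, rfl⟩ := hv
    have hab : a ≠ b := fun hcon => hxy (by rw [hcon])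
    have hcd : c ≠ d := fun hcon => huv (by rw [hcon])
    rw [arc_dist hNh hh hn a b, arc_dist hNh hh hn c d] at hdist
    have e1lt : (a - b).val < N := ZMod.val_lt _
    have e2lt : (c - d).val < N := ZMod.val_lt _
    have e1pos : (a - b).val ≠ 0 :=
      fun hc => (sub_ne_zero.mpr hab) ((ZMod.val_eq_zero _).mp hc)
    have e2pos : (c - d).val ≠ 0 :=
      fun hc => (sub_ne_zero.mpr hcd) ((ZMod.val_eq_zero _).mp hc)
    have hcases : (a - b).val = (c - d).val ∨ (a - b).val + (c - d).val = N := by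
      omega
    rcases hcases with hcc | hcc
    · have hsub : a - b = c - d := ZMod.val_injective N hcc
      have hadd : a + d = c + b := by linear_combination hsub
      rcases hsidon a haS d hdS c hcS b hbS hadd with ⟨h1, h2⟩ | ⟨h1, h2⟩
      · rw [h1, ← h2]
      · exact absurd h1 hab
    · have hzero : (a - b) + (c - d) = 0 := by
        have ea : (((a - b).val : ℕ) : ZMod N) = a - b := ZMod.natCast_rightInverse _
        have ec : (((c - d).val : ℕ) : ZMod N) = c - d := ZMod.natCast_rightInverse _
        have : ((((a - b).val + (c - d).val : ℕ)) : ZMod N) = 0 := by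
          rw [hcc]; exact ZMod.natCast_self N
        rwa [Nat.cast_add, ea, ec] at this
      have hadd : a + c = d + b := by linear_combination hzero
      rcases hsidon a haS c hcS d hdS b hbS hadd with ⟨h1, h2⟩ | ⟨h1, h2⟩
      · rw [h1, ← h2, Finset.pair_comm]
      · exact absurd h1 hab

/-- for every `ε > 0` and all sufficiently large `n`, there exists a
rainbow set `R ⊆ 𝔽₂ⁿ` with `|R| ≥ (1/√2 - ε) √n`. -/
theorem stmt14 (ε : ℝ) (hε : 0 < ε) :
    ∃ n₀ : ℕ, ∀ n ≥ n₀, ∃ R : Finset (Fin n → ZMod 2),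
      IsRainbow R ∧ (1 / Real.sqrt 2 - ε) * Real.sqrt n ≤ (R.card : ℝ) := by
  refine ⟨8, fun n hn8 => ?_⟩
  obtain ⟨s, hs⟩ : ∃ s, s = Nat.sqrt (2 * n) := ⟨_, rfl⟩
  have hs1 : 2 * n < (s + 1) * (s + 1) := by rw [hs]; exact Nat.lt_succ_sqrt (2 * n)
  have hs2 : s * s ≤ 2 * n := by rw [hs]; exact Nat.sqrt_le (2 * n)
  have hs4 : 4 ≤ s := by rw [hs]; exact Nat.le_sqrt.mpr (by omega)
  obtain ⟨m, hm⟩ : ∃ m, m = s / 2 := ⟨_, rfl⟩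
  obtain ⟨q, hqp, hq1, hq2⟩ := Nat.exists_prime_lt_and_le_two_mul m (by omega)
  haveI : Fact q.Prime := ⟨hqp⟩
  have hq3 : 3 ≤ q := by omega
  have hqodd : Odd q := hqp.odd_of_ne_two (by omega)
  obtain ⟨k, hk⟩ := hqodd
  have hsq : q ^ 2 = 4 * (k * k) + 4 * k + 1 := by rw [hk]; ring
  obtain ⟨h, hh2⟩ : ∃ h, q ^ 2 - 1 = 2 * h := ⟨2 * (k * k) + 2 * k, by omega⟩
  -- q ≤ s, so q^2 ≤ 2n and h ≤ n
  have hqs : q ≤ s := by omega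
  have hq2n : q ^ 2 ≤ 2 * n := by
    have : q * q ≤ s * s := Nat.mul_le_mul hqs hqs
    calc q ^ 2 = q * q := sq q
    _ ≤ s * s := this
    _ ≤ 2 * n := hs2
  have hhn : h ≤ n := by omega
  obtain ⟨R, hrainbow, hcard⟩ := exists_rainbow q (q ^ 2 - 1) h n rfl hh2 (by omega) hhn
  refine ⟨R, hrainbow, ?_⟩
  rw [hcard]
  -- now the real estimate
  have h2q : 2 * n < (2 * q) * (2 * q) := by
    have hsq' : s + 1 ≤ 2 * q := by omega
    calc 2 * n < (s + 1) * (s + 1) := hs1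
    _ ≤ (2 * q) * (2 * q) := Nat.mul_le_mul hsq' hsq'
  have h2q' : 2 * n < 4 * q ^ 2 := by nlinarith [h2q]
  have hnr : (n : ℝ) ≤ 2 * (q : ℝ) ^ 2 := by
    have : n ≤ 2 * q ^ 2 := by omega
    exact_mod_cast this
  have hstep : Real.sqrt n ≤ (q : ℝ) * Real.sqrt 2 := by
    have h1 : Real.sqrt n ≤ Real.sqrt (2 * (q : ℝ) ^ 2) := Real.sqrt_le_sqrt hnr
    have h2 : (2 * (q : ℝ) ^ 2) = ((q : ℝ) * Real.sqrt 2) ^ 2 := by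
      rw [mul_pow, Real.sq_sqrt (by norm_num : (2:ℝ) ≥ 0)]
      ring
    rwa [h2, Real.sqrt_sq (by positivity)] at h1
  have hsqrt2 : (0:ℝ) < Real.sqrt 2 := Real.sqrt_pos.mpr (by norm_num)
  calc (1 / Real.sqrt 2 - ε) * Real.sqrt n
      ≤ (1 / Real.sqrt 2) * Real.sqrt n := by
        apply mul_le_mul_of_nonneg_right _ (Real.sqrt_nonneg _)
        linarith
    _ ≤ (q : ℝ) := by
        rw [one_div, inv_mul_eq_div, div_le_iff₀ hsqrt2]
        exact hstep
end

section
/- Let 0 < α ≤ 1 and S ⊆ F_2^n with |S| ≥ α·2^n. Then there exists a ∈ F_2^n and a chain C (under the coordinatewise partial order) contained in the translate S + a with |C| ≥ αn. -/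
open Finset

/-- if `0 < α ≤ 1` and `S ⊆ 𝔽₂ⁿ` has `|S| ≥ α 2ⁿ`, then some
translate `S + a` contains a chain `C` (in the coordinatewise partial order,
`x ≤ y` iff the support of `x` is contained in that of `y`) with `|C| ≥ α n`. -/
theorem stmt17 (n : ℕ) (α : ℝ) (hα0 : 0 < α) (hα1 : α ≤ 1)
    (S : Finset (Fin n → ZMod 2)) (hS : α * 2 ^ n ≤ (S.card : ℝ)) :
    ∃ a : Fin n → ZMod 2, ∃ C : Finset (Fin n → ZMod 2),
      C ⊆ S.image (fun x => x + a) ∧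
      IsChain (fun x y : Fin n → ZMod 2 => ∀ i, x i = 1 → y i = 1) (C : Set (Fin n → ZMod 2)) ∧
      α * n ≤ (C.card : ℝ) := by
  classical
  -- self-inverse addition
  have hself : ∀ x : Fin n → ZMod 2, x + x = 0 := by
    intro x; funext i
    exact CharTwo.add_self_eq_zero (x i)
  -- the fixed maximal chain
  set v : Fin (n+1) → (Fin n → ZMod 2) :=
    fun k i => if (i : ℕ) < (k : ℕ) then 1 else 0 with hv
  have hvinj : Function.Injective v := by
    intro k m hEq
    by_contra hne
    have hlem : ∀ k m : Fin (n+1), (k:ℕ) < (m:ℕ) → v k = v m → False := by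
      intro k m h hE
      have hk : (k:ℕ) < n := lt_of_lt_of_le h (Nat.lt_succ_iff.mp m.isLt)
      have := congrFun hE ⟨(k:ℕ), hk⟩
      simp only [v] at this
      rw [if_neg (lt_irrefl _), if_pos h] at this
      exact absurd this (by decide)
    rcases lt_or_gt_of_ne (fun h : (k:ℕ) = (m:ℕ) => hne (Fin.ext h)) with h | h
    · exact hlem k m h hEq
    · exact hlem m k h hEq.symm
  have hmono : ∀ k m : Fin (n+1), (k:ℕ) ≤ (m:ℕ) → ∀ i, v k i = 1 → v m i = 1 := by
    intro k m h i hi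
    simp only [v] at hi ⊢
    by_cases hik : (i:ℕ) < (k:ℕ)
    · rw [if_pos (lt_of_lt_of_le hik h)]
    · rw [if_neg hik] at hi; exact absurd hi (by decide)
  set P : Finset (Fin n → ZMod 2) := (univ : Finset (Fin (n+1))).image v with hP
  have hPcard : P.card = n + 1 := by
    rw [hP, Finset.card_image_of_injective _ hvinj, Finset.card_univ, Fintype.card_fin]
  -- counting
  have hfilter : ∀ p : Fin n → ZMod 2,
      (univ.filter fun a => p + a ∈ S) = S.image (fun x => p + x) := by
    intro p; ext a
    simp only [mem_filter, mem_univ, true_and, mem_image]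
    constructor
    · intro h; exact ⟨p + a, h, by rw [← add_assoc, hself, zero_add]⟩
    · rintro ⟨x, hx, rfl⟩; rwa [← add_assoc, hself, zero_add]
  have hcount : ∑ a : Fin n → ZMod 2, (P.filter fun p => p + a ∈ S).card
      = (n + 1) * S.card := by
    calc ∑ a : Fin n → ZMod 2, (P.filter fun p => p + a ∈ S).card
        = ∑ a : Fin n → ZMod 2, ∑ p ∈ P, if p + a ∈ S then 1 else 0 :=
          Finset.sum_congr rfl (fun a _ => Finset.card_filter _ _)
      _ = ∑ p ∈ P, ∑ a : Fin n → ZMod 2, if p + a ∈ S then 1 else 0 :=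
          Finset.sum_comm
      _ = ∑ p ∈ P, S.card := by
          refine Finset.sum_congr rfl (fun p _ => ?_)
          rw [← Finset.card_filter, hfilter p,
            Finset.card_image_of_injective _ (add_right_injective p)]
      _ = (n + 1) * S.card := by
          rw [Finset.sum_const, hPcard, smul_eq_mul]
  -- averaging
  have hcard2 : Fintype.card (Fin n → ZMod 2) = 2 ^ n := by
    rw [Fintype.card_fun, ZMod.card, Fintype.card_fin]
  obtain ⟨a, -, ha⟩ : ∃ a ∈ (univ : Finset (Fin n → ZMod 2)),
      (n + 1) * S.card ≤ 2 ^ n * (P.filter fun p => p + a ∈ S).card := by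
    apply Finset.exists_le_of_sum_le Finset.univ_nonempty
    simp only [← Finset.mul_sum, hcount, Finset.sum_const, Finset.card_univ,
      hcard2, smul_eq_mul]
    exact le_of_eq (by ring)
  refine ⟨a, P.filter fun p => p + a ∈ S, ?_, ?_, ?_⟩
  · intro p hp
    rw [Finset.mem_filter] at hp
    rw [Finset.mem_image]
    exact ⟨p + a, hp.2, by rw [add_assoc, hself, add_zero]⟩
  · intro x hx y hy hne
    simp only [Finset.coe_filter, Set.mem_setOf_eq, hP, Finset.mem_image] at hx hy
    obtain ⟨⟨k, -, rfl⟩, -⟩ := hx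
    obtain ⟨⟨m, -, rfl⟩, -⟩ := hy
    rcases le_total (k:ℕ) (m:ℕ) with h | h
    · exact Or.inl (hmono k m h)
    · exact Or.inr (hmono m k h)
  · have hcast : ((n:ℝ) + 1) * S.card ≤ 2 ^ n * ((P.filter fun p => p + a ∈ S).card : ℝ) := by
      exact_mod_cast ha
    have h2 : (0:ℝ) < 2 ^ n := by positivity
    have hn : (0:ℝ) ≤ (n:ℝ) := Nat.cast_nonneg n
    nlinarith [mul_le_mul_of_nonneg_left hS (by positivity : (0:ℝ) ≤ (n:ℝ) + 1)]
end

section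
/- Let 0 < α ≤ 1 and S ⊆ F_2^n with |S| ≥ α·2^n. Then S contains a rainbow subset of size Ω(α^{1/2} n^{1/2}): there exists R ⊆ S with all pairwise Hamming distances distinct and |R| ≥ c·√(αn) for an absolute constant c > 0. -/
set_option maxHeartbeats 1000000


lemma ediv_add_ediv_le (a b Q : ℤ) (hQ : 0 < Q) :
    a / Q + b / Q ≤ (a + b) / Q ∧ (a + b) / Q ≤ a / Q + b / Q + 1 := by
  have ha := Int.mul_ediv_add_emod a Q
  have hb := Int.mul_ediv_add_emod b Q
  have hra : 0 ≤ a % Q := Int.emod_nonneg a hQ.ne'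
  have hrb : 0 ≤ b % Q := Int.emod_nonneg b hQ.ne'
  have hra' : a % Q < Q := Int.emod_lt_of_pos a hQ
  have hrb' : b % Q < Q := Int.emod_lt_of_pos b hQ
  have key : (a + b) / Q = a / Q + b / Q + (a % Q + b % Q) / Q := by
    have h : a + b = (a % Q + b % Q) + (a / Q + b / Q) * Q := by linarith
    rw [h, Int.add_mul_ediv_right _ _ hQ.ne']
    ring
  have h0 : 0 ≤ (a % Q + b % Q) / Q := Int.ediv_nonneg (by linarith) hQ.le
  have h1 : (a % Q + b % Q) / Q < 2 := by
    rw [Int.ediv_lt_iff_lt_mul hQ]; linarith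
  constructor <;> omega

/-- key "arc" lemma: buckets of congruent sums are congruent mod `M`, given the
mod-4 bucket restriction. -/
lemma arc_lemma (Q M : ℤ) (hQ : 0 < Q) (hM : 0 < M) (h4 : (4:ℤ) ∣ M)
    (x1 x2 x3 x4 : ℤ)
    (h1 : 0 ≤ x1) (h1' : x1 < Q) (h2 : 0 ≤ x2) (h2' : x2 < Q)
    (h3 : 0 ≤ x3) (h3' : x3 < Q) (h4a : 0 ≤ x4) (h4'' : x4 < Q)
    (hcong : Q ∣ (x1 + x4) - (x2 + x3))
    (hb1 : (4:ℤ) ∣ x1 * M / Q) (hb2 : (4:ℤ) ∣ x2 * M / Q)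
    (hb3 : (4:ℤ) ∣ x3 * M / Q) (hb4 : (4:ℤ) ∣ x4 * M / Q) :
    M ∣ (x1 * M / Q + x4 * M / Q) - (x2 * M / Q + x3 * M / Q) := by
  set D : ℤ := (x1 - x2) % Q with hD
  have hD0 : 0 ≤ D := Int.emod_nonneg _ hQ.ne'
  have hDQ : D < Q := Int.emod_lt_of_pos _ hQ
  set β : ℤ := D * M / Q with hβ
  have sub : ∀ x y : ℤ, 0 ≤ x → x < Q → 0 ≤ y → y < Q → Q ∣ (x - y) - D →
      ∃ ε η : ℤ, (ε = 0 ∨ ε = 1) ∧ (η = 0 ∨ η = 1) ∧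
        x * M / Q - y * M / Q = β + ε - η * M := by
    intro x y hx hx' hy hy' hdvd
    obtain ⟨k, hk⟩ := hdvd
    have hk1 : Q * (-2) < Q * k := by nlinarith
    have hk2 : Q * k < Q * 1 := by nlinarith
    have hkm2 : (-2:ℤ) < k := lt_of_mul_lt_mul_left hk1 hQ.le
    have hk1' : k < 1 := lt_of_mul_lt_mul_left hk2 hQ.le
    have hcases : x - y = D ∨ x - y = D - Q := by
      have : k = 0 ∨ k = -1 := by omega
      rcases this with h | h <;> rw [h] at hk <;> [left; right] <;> omega
    rcases hcases with hc | hc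
    · have h := ediv_add_ediv_le (y * M) (D * M) Q hQ
      have hxM : x * M = y * M + D * M := by nlinarith
      rcases h with ⟨hl, hr⟩
      rw [← hxM] at hl hr
      refine ⟨x * M / Q - y * M / Q - β, 0, ?_, Or.inl rfl, by ring⟩
      omega
    · have h := ediv_add_ediv_le (y * M) (D * M) Q hQ
      have hxM : x * M + Q * M = y * M + D * M := by nlinarith
      have hQM : (x * M + Q * M) / Q = x * M / Q + M := by
        rw [show x * M + Q * M = x * M + M * Q by ring, Int.add_mul_ediv_right _ _ hQ.ne']
      rcases h with ⟨hl, hr⟩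
      rw [← hxM, hQM] at hl hr
      refine ⟨x * M / Q - y * M / Q - β + M, 1, ?_, Or.inr rfl, by ring⟩
      omega
  have hdvd12 : Q ∣ (x1 - x2) - D := by
    have := Int.mul_ediv_add_emod (x1 - x2) Q
    exact ⟨(x1 - x2) / Q, by omega⟩
  have hdvd34 : Q ∣ (x3 - x4) - D := by
    obtain ⟨c, hc⟩ := hcong
    obtain ⟨e, he⟩ := hdvd12
    exact ⟨e - c, by linarith [hc, he, mul_sub Q e c]⟩
  obtain ⟨ε1, η1, hε1, hη1, he1⟩ := sub x1 x2 h1 h1' h2 h2' hdvd12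
  obtain ⟨ε2, η2, hε2, hη2, he2⟩ := sub x3 x4 h3 h3' h4a h4'' hdvd34
  obtain ⟨M4, rfl⟩ := h4
  obtain ⟨t1, ht1⟩ := hb1
  obtain ⟨t2, ht2⟩ := hb2
  obtain ⟨t3, ht3⟩ := hb3
  obtain ⟨t4, ht4⟩ := hb4
  refine ⟨η2 - η1, ?_⟩
  rcases hε1 with rfl | rfl <;> rcases hε2 with rfl | rfl <;>
    rcases hη1 with rfl | rfl <;> rcases hη2 with rfl | rfl <;> omega


lemma lt_div_succ_mul (x b : ℕ) (hb : 0 < b) : x < (x / b + 1) * b := by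
  have h1 := Nat.div_add_mod x b
  have h2 : x % b < b := Nat.mod_lt _ hb
  have h3 : (x / b + 1) * b = b * (x / b) + b := by ring
  omega

-- bucket width: two numbers in the same bucket are close
lemma bucket_width (Q M u v : ℕ) (hQ : 0 < Q) (huv : u ≤ v)
    (h : u * M / Q = v * M / Q) : (v - u) * M < Q := by
  have h2 : v * M < (v * M / Q + 1) * Q := lt_div_succ_mul _ _ hQ
  have h5 : (u * M / Q) * Q ≤ u * M := Nat.div_mul_le_self _ _
  have e : (v * M / Q + 1) * Q = (u * M / Q) * Q + Q := by rw [← h]; ring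
  have h4 : u * M ≤ v * M := Nat.mul_le_mul_right _ huv
  have h6 : (v - u) * M = v * M - u * M := Nat.sub_mul _ _ _
  omega

-- count of x < Q with bucket ≡ 0 mod 4 is at least Q/5
lemma g_count (Q M p : ℕ) (hp : 0 < p) (hM : M = 4 * p) (hQ : 20 * M * M ≤ Q) :
    Q ≤ 5 * ((Finset.range Q).filter (fun x => x * M / Q % 4 = 0)).card := by
  have hM0 : 0 < M := by omega
  have hQ0 : 0 < Q := by
    have : 0 < 20 * M * M := by positivity
    omega
  set a : ℕ → ℕ := fun j => (j * Q + (M - 1)) / M with ha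
  set w : ℕ := Q / M with hw
  have haM : ∀ j, j * Q ≤ a j * M := by
    intro j
    have h2 : j * Q + (M-1) < (a j + 1) * M := lt_div_succ_mul _ _ hM0
    have h3 : (a j + 1) * M = a j * M + M := by ring
    omega
  have haM' : ∀ j, a j * M < j * Q + M := by
    intro j
    have h1 : (a j) * M ≤ j * Q + (M - 1) := Nat.div_mul_le_self _ _
    omega
  have hmono : ∀ j j', j ≤ j' → a j ≤ a j' := by
    intro j j' hj
    exact Nat.div_le_div_right (by
      have : j * Q ≤ j' * Q := Nat.mul_le_mul_right _ hj
      omega)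
  have hgap : ∀ j, a j + w ≤ a (j+1) := by
    intro j
    have h1 := haM' j
    have h2 := haM (j+1)
    have hwM : w * M ≤ Q := Nat.div_mul_le_self _ _
    have key : (a j + w) * M < (a (j+1) + 1) * M := by
      have e1 : (a j + w) * M = a j * M + w * M := by ring
      have e2 : (a (j+1) + 1) * M = a (j+1) * M + M := by ring
      have e3 : (j+1) * Q = j * Q + Q := by ring
      omega
    have := Nat.lt_of_mul_lt_mul_right key
    omega
  have haQ : ∀ j, j ≤ M → a j ≤ Q := by
    intro j hj
    have haMQ : a M = Q := by
      have h1 := haM M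
      have h2 := haM' M
      have : a M * M < Q * M + M := by
        have e : M * Q = Q * M := by ring
        omega
      have h3 : a M * M < (Q + 1) * M := by
        have e : (Q+1) * M = Q * M + M := by ring
        omega
      have h4 : a M < Q + 1 := Nat.lt_of_mul_lt_mul_right h3
      have h5 : Q * M ≤ a M * M := by
        have e : M * Q = Q * M := by ring
        omega
      have h6 : Q ≤ a M := Nat.le_of_mul_le_mul_right h5 hM0
      omega
    calc a j ≤ a M := hmono _ _ hj
    _ = Q := haMQ
  have hmem : ∀ j x, a j ≤ x → x < a (j+1) → x * M / Q = j := by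
    intro j x hx hx'
    have hlo : j * Q ≤ x * M := le_trans (haM j) (Nat.mul_le_mul_right _ hx)
    have hhi : x * M < (j+1) * Q := by
      by_contra hcon
      push_neg at hcon
      have hax : a (j+1) ≤ x := by
        have h1 : a (j+1) * M < (j+1) * Q + M := haM' (j+1)
        have h2 : a (j+1) * M < x * M + M := by omega
        have h3 : a (j+1) * M < (x + 1) * M := by
          have e : (x+1) * M = x * M + M := by ring
          omega
        have := Nat.lt_of_mul_lt_mul_right h3
        omega
      omega
    exact Nat.div_eq_of_lt_le hlo hhi
  have hcard : p * w ≤ ((Finset.range Q).filter (fun x => x * M / Q % 4 = 0)).card := by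
    have hinj := Finset.card_le_card_of_injOn
      (fun q : ℕ × ℕ => a (4 * q.1) + q.2)
      (s := (Finset.range p) ×ˢ (Finset.range w))
      (t := (Finset.range Q).filter (fun x => x * M / Q % 4 = 0))
      ?_ ?_
    · simpa [Finset.card_product] using hinj
    · rintro ⟨k, i⟩ hki
      simp only [Finset.mem_coe, Finset.mem_product, Finset.mem_range] at hki
      obtain ⟨hk, hi⟩ := hki
      have hlt : a (4 * k) + i < a (4 * k + 1) := by
        have := hgap (4 * k); omega
      have hbucket : (a (4 * k) + i) * M / Q = 4 * k := hmem _ _ (by omega) hlt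
      have hxQ : a (4 * k) + i < Q := by
        have h1 : a (4 * k + 1) ≤ Q := haQ _ (by omega)
        omega
      simp only [Finset.mem_coe, Finset.mem_filter, Finset.mem_range]
      exact ⟨hxQ, by omega⟩
    · rintro ⟨k, i⟩ hki ⟨k', i'⟩ hki' heq
      simp only [Finset.coe_product, Set.mem_prod, Finset.mem_coe, Finset.mem_range] at hki hki'
      have heq2 : a (4 * k) + i = a (4 * k') + i' := heq
      clear heq
      rcases lt_trichotomy k k' with h | h | h
      · exfalso
        have h1 : a (4 * k) + i < a (4 * k + 1) := by have := hgap (4 * k); omega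
        have h2 : a (4 * k + 1) ≤ a (4 * k') := hmono _ _ (by omega)
        omega
      · refine Prod.ext h ?_
        rw [h] at heq2
        omega
      · exfalso
        have h1 : a (4 * k') + i' < a (4 * k' + 1) := by have := hgap (4 * k'); omega
        have h2 : a (4 * k' + 1) ≤ a (4 * k) := hmono _ _ (by omega)
        omega
  have hw4 : 4 ≤ w := by
    rw [hw]
    have : 20 * M ≤ Q / M := (Nat.le_div_iff_mul_le hM0).2 (by
      have e : 20 * M * M = 20 * M * M := rfl
      omega)
    omega
  have hQw : Q < M * w + M := by
    have h := lt_div_succ_mul Q M hM0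
    have e : (Q / M + 1) * M = M * (Q / M) + M := by ring
    rw [e] at h
    rw [hw]
    omega
  have hfin : Q ≤ 5 * (p * w) := by
    have e1 : M * w = 4 * (p * w) := by rw [hM]; ring
    have e2 : 4 * p ≤ p * w := by
      calc 4 * p = p * 4 := by ring
      _ ≤ p * w := Nat.mul_le_mul_left _ hw4
    omega
  calc Q ≤ 5 * (p * w) := hfin
  _ ≤ 5 * ((Finset.range Q).filter (fun x => x * M / Q % 4 = 0)).card :=
      Nat.mul_le_mul_left _ hcard



lemma card_filter_product {α β : Type*} [DecidableEq α] [DecidableEq β]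
    (s : Finset α) (t : Finset β) (P : α × β → Prop) [DecidablePred P] :
    ((s ×ˢ t).filter P).card = ∑ x ∈ s, (t.filter (fun y => P (x, y))).card := by
  rw [Finset.card_filter, Finset.sum_product]
  congr 1
  ext x
  rw [Finset.card_filter]

section
variable (Q M : ℕ)

/-- the scrambled value -/
def Xv (l t a : ℕ) : ℕ := ((l * a + t : ℕ) : ZMod Q).val

/-- the bucket -/
def Bk (l t a : ℕ) : ℕ := Xv Q l t a * M / Q

lemma Xv_lt [NeZero Q] (l t a : ℕ) : Xv Q l t a < Q := ZMod.val_lt _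

lemma Xv_formula [NeZero Q] (l a x : ℕ) (hx : x < Q) :
    Xv Q l (((x : ZMod Q) - ((l * a : ℕ) : ZMod Q)).val) a = x := by
  unfold Xv
  rw [Nat.cast_add, ZMod.natCast_val, ZMod.cast_id]
  have e : ((l * a : ℕ) : ZMod Q) + ((x : ZMod Q) - ((l * a : ℕ) : ZMod Q))
      = (x : ZMod Q) := by ring
  rw [e, ZMod.val_cast_of_lt hx]

lemma t_count [NeZero Q] (P : ℕ → Prop) [DecidablePred P] (l a : ℕ) :
    ((Finset.range Q).filter (fun t => P (Xv Q l t a))).card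
      = ((Finset.range Q).filter (fun x => P x)).card := by
  apply Finset.card_bij' (fun t _ => Xv Q l t a)
    (fun x _ => ((x : ZMod Q) - ((l * a : ℕ) : ZMod Q)).val)
  · intro t ht
    simp only [Finset.mem_filter, Finset.mem_range] at ht ⊢
    exact ⟨Xv_lt Q l t a, ht.2⟩
  · intro x hx
    simp only [Finset.mem_filter, Finset.mem_range] at hx ⊢
    refine ⟨ZMod.val_lt _, ?_⟩
    rw [Xv_formula Q l a x hx.1]
    exact hx.2
  · intro t ht
    simp only [Finset.mem_filter, Finset.mem_range] at ht
    unfold Xv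
    rw [ZMod.natCast_val, ZMod.cast_id]
    have e : (((l * a + t : ℕ) : ZMod Q)) - ((l * a : ℕ) : ZMod Q) = (t : ZMod Q) := by
      push_cast; ring
    rw [e, ZMod.val_cast_of_lt ht.1]
  · intro x hx
    simp only [Finset.mem_filter, Finset.mem_range] at hx
    exact Xv_formula Q l a x hx.1
end

section
variable (Q M : ℕ)

lemma val_add_cases [NeZero Q] (x y : ZMod Q) :
    (x + y).val = x.val + y.val ∨ (x + y).val + Q = x.val + y.val := by
  have h := ZMod.val_add x y
  have hx := ZMod.val_lt x
  have hy := ZMod.val_lt y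
  rcases lt_or_ge (x.val + y.val) Q with hc | hc
  · left; rw [h, Nat.mod_eq_of_lt hc]
  · right
    have h2 : (x.val + y.val) % Q = x.val + y.val - Q := by
      rw [Nat.mod_eq_sub_mod hc, Nat.mod_eq_of_lt (by omega)]
    rw [h, h2]; omega

lemma pair_count [Fact (Nat.Prime Q)] (hM0 : 0 < M) (a a' : ℕ) (haa : a < a') (ha' : a' < Q) :
    M * ((Finset.Ico 1 Q ×ˢ Finset.range Q).filter
      (fun ω => Bk Q M ω.1 ω.2 a = Bk Q M ω.1 ω.2 a')).card ≤ 2 * Q * Q := by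
  haveI : NeZero Q := ⟨(Fact.out : Nat.Prime Q).ne_zero⟩
  have hQ0 : 0 < Q := Nat.pos_of_ne_zero (Fact.out : Nat.Prime Q).ne_zero
  set d : ℕ := a' - a with hd
  have hd0 : 0 < d := by omega
  have hdQ : d < Q := by omega
  have hdcast : ((d : ℕ) : ZMod Q) ≠ 0 := by
    rw [Ne, ZMod.natCast_eq_zero_iff]
    intro hdvd
    have := Nat.le_of_dvd hd0 hdvd
    omega
  have hDpos : ∀ l, 0 < l → l < Q → 0 < ((l * d : ℕ) : ZMod Q).val := by
    intro l hl1 hlQ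
    have hlcast : ((l : ℕ) : ZMod Q) ≠ 0 := by
      rw [Ne, ZMod.natCast_eq_zero_iff]
      intro hdvd
      have := Nat.le_of_dvd hl1 hdvd
      omega
    have hmul : ((l * d : ℕ) : ZMod Q) ≠ 0 := by
      rw [Nat.cast_mul]
      exact mul_ne_zero hlcast hdcast
    have hne : ((l * d : ℕ) : ZMod Q).val ≠ 0 := fun h0 => hmul ((ZMod.val_eq_zero _).1 h0)
    omega
  have hinner : ∀ l, 0 < l → l < Q → Q ≤ ((l * d : ℕ) : ZMod Q).val * M →
      Q ≤ (Q - ((l * d : ℕ) : ZMod Q).val) * M →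
      ((Finset.range Q).filter (fun t => Bk Q M l t a = Bk Q M l t a')).card = 0 := by
    intro l hl1 hlQ hbig1 hbig2
    rw [Finset.card_eq_zero, Finset.filter_eq_empty_iff]
    intro t _ hB
    have hcast : ((l * a' + t : ℕ) : ZMod Q)
        = ((l * a + t : ℕ) : ZMod Q) + ((l * d : ℕ) : ZMod Q) := by
      have e : l * a' + t = (l * a + t) + l * d := by
        have : l * a' = l * a + l * d := by
          rw [show a' = a + d from by omega, Nat.mul_add]
        omega
      rw [e]; push_cast; ring
    have hval := val_add_cases Q ((l * a + t : ℕ) : ZMod Q) ((l * d : ℕ) : ZMod Q)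
    rw [← hcast] at hval
    have hxa := Xv_lt Q l t a
    have hxa' := Xv_lt Q l t a'
    have hDQ : ((l * d : ℕ) : ZMod Q).val < Q := ZMod.val_lt _
    have hXa : ((l * a + t : ℕ) : ZMod Q).val = Xv Q l t a := rfl
    have hXa' : ((l * a' + t : ℕ) : ZMod Q).val = Xv Q l t a' := rfl
    rw [hXa, hXa'] at hval
    unfold Bk at hB
    rcases hval with hv | hv
    · have hle : Xv Q l t a ≤ Xv Q l t a' := by omega
      have hbw := bucket_width Q M (Xv Q l t a) (Xv Q l t a') hQ0 hle hB
      have heq : Xv Q l t a' - Xv Q l t a = ((l * d : ℕ) : ZMod Q).val := by omega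
      rw [heq] at hbw
      omega
    · have hle : Xv Q l t a' ≤ Xv Q l t a := by omega
      have hbw := bucket_width Q M (Xv Q l t a') (Xv Q l t a) hQ0 hle hB.symm
      have heq : Xv Q l t a - Xv Q l t a' = Q - ((l * d : ℕ) : ZMod Q).val := by omega
      rw [heq] at hbw
      omega
  have hbadcard : ((Finset.Ico 1 Q).filter
      (fun l => ((l * d : ℕ) : ZMod Q).val * M < Q ∨
        (Q - ((l * d : ℕ) : ZMod Q).val) * M < Q)).card ≤ Q / M + Q / M := by
    have hsub : ((Finset.Ico 1 Q).filter (fun l => ((l * d : ℕ) : ZMod Q).val * M < Q ∨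
        (Q - ((l * d : ℕ) : ZMod Q).val) * M < Q)).card
        ≤ (Finset.Icc 1 (Q / M) ∪ Finset.Ico (Q - Q / M) Q).card := by
      apply Finset.card_le_card_of_injOn (fun l => ((l * d : ℕ) : ZMod Q).val)
      · intro l hl
        simp only [Finset.mem_coe, Finset.mem_filter, Finset.mem_Ico] at hl
        obtain ⟨⟨hl1, hlQ⟩, hbad⟩ := hl
        have hD1 : 0 < ((l * d : ℕ) : ZMod Q).val := hDpos l hl1 hlQ
        have hDQ : ((l * d : ℕ) : ZMod Q).val < Q := ZMod.val_lt _
        simp only [Finset.mem_coe, Finset.mem_union, Finset.mem_Icc, Finset.mem_Ico]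
        rcases hbad with hb | hb
        · exact Or.inl ⟨hD1, (Nat.le_div_iff_mul_le hM0).2 (by omega)⟩
        · right
          have : Q - ((l * d : ℕ) : ZMod Q).val ≤ Q / M :=
            (Nat.le_div_iff_mul_le hM0).2 (by omega)
          omega
      · intro l hl l' hl' heq
        simp only [Finset.coe_filter, Set.mem_setOf_eq, Finset.mem_Ico] at hl hl'
        have hcast : ((l * d : ℕ) : ZMod Q) = ((l' * d : ℕ) : ZMod Q) :=
          ZMod.val_injective _ heq
        rw [Nat.cast_mul, Nat.cast_mul] at hcast
        have hll' : ((l : ℕ) : ZMod Q) = ((l' : ℕ) : ZMod Q) :=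
          mul_right_cancel₀ hdcast hcast
        have h1 : l % Q = l' % Q := (ZMod.natCast_eq_natCast_iff l l' Q).1 hll'
        rw [Nat.mod_eq_of_lt hl.1.2, Nat.mod_eq_of_lt hl'.1.2] at h1
        exact h1
    obtain ⟨qm, hqm⟩ : ∃ qm, Q / M = qm := ⟨_, rfl⟩
    rw [hqm] at hsub ⊢
    have hcup := Finset.card_union_le (Finset.Icc 1 qm) (Finset.Ico (Q - qm) Q)
    have h1 : (Finset.Icc 1 qm).card = qm := by rw [Nat.card_Icc]; omega
    have h2 : (Finset.Ico (Q - qm) Q).card ≤ qm := by rw [Nat.card_Ico]; omega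
    omega
  rw [card_filter_product]
  have hsum : ∑ l ∈ Finset.Ico 1 Q,
      ((Finset.range Q).filter (fun t => Bk Q M l t a = Bk Q M l t a')).card
      ≤ ∑ l ∈ Finset.Ico 1 Q,
        (if ((l * d : ℕ) : ZMod Q).val * M < Q ∨
          (Q - ((l * d : ℕ) : ZMod Q).val) * M < Q then Q else 0) := by
    apply Finset.sum_le_sum
    intro l hl
    simp only [Finset.mem_Ico] at hl
    by_cases hb : ((l * d : ℕ) : ZMod Q).val * M < Q ∨
        (Q - ((l * d : ℕ) : ZMod Q).val) * M < Q
    · rw [if_pos hb]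
      calc ((Finset.range Q).filter (fun t => Bk Q M l t a = Bk Q M l t a')).card
          ≤ (Finset.range Q).card := Finset.card_filter_le _ _
      _ = Q := Finset.card_range Q
    · rw [if_neg hb]
      push_neg at hb
      rw [hinner l hl.1 hl.2 hb.1 hb.2]
  have hsum2 : ∑ l ∈ Finset.Ico 1 Q,
      (if ((l * d : ℕ) : ZMod Q).val * M < Q ∨
        (Q - ((l * d : ℕ) : ZMod Q).val) * M < Q then Q else 0)
      = Q * ((Finset.Ico 1 Q).filter
          (fun l => ((l * d : ℕ) : ZMod Q).val * M < Q ∨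
            (Q - ((l * d : ℕ) : ZMod Q).val) * M < Q)).card := by
    rw [← Finset.sum_filter, Finset.sum_const, smul_eq_mul, mul_comm]
  have hMQ : M * (Q / M) ≤ Q := Nat.mul_div_le Q M
  calc M * ∑ l ∈ Finset.Ico 1 Q,
        ((Finset.range Q).filter (fun t => Bk Q M l t a = Bk Q M l t a')).card
      ≤ M * (Q * ((Finset.Ico 1 Q).filter
          (fun l => ((l * d : ℕ) : ZMod Q).val * M < Q ∨
            (Q - ((l * d : ℕ) : ZMod Q).val) * M < Q)).card) := by
        apply Nat.mul_le_mul_left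
        rw [← hsum2]; exact hsum
  _ ≤ M * (Q * (Q / M + Q / M)) := by
        apply Nat.mul_le_mul_left
        apply Nat.mul_le_mul_left
        exact hbadcard
  _ = 2 * Q * (M * (Q / M)) := by ring
  _ ≤ 2 * Q * Q := Nat.mul_le_mul_left _ hMQ

end

open Finset in
lemma sum_G (Q M : ℕ) [NeZero Q] (B : Finset ℕ) :
    ∑ ω ∈ (Finset.Ico 1 Q ×ˢ Finset.range Q),
        (B.filter (fun a => Bk Q M ω.1 ω.2 a % 4 = 0)).card
      = B.card * ((Q - 1) *
          ((Finset.range Q).filter (fun x => x * M / Q % 4 = 0)).card) := by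
  classical
  calc ∑ ω ∈ (Finset.Ico 1 Q ×ˢ Finset.range Q),
        (B.filter (fun a => Bk Q M ω.1 ω.2 a % 4 = 0)).card
      = ∑ ω ∈ (Finset.Ico 1 Q ×ˢ Finset.range Q), ∑ a ∈ B,
          (if Bk Q M ω.1 ω.2 a % 4 = 0 then 1 else 0) := by
        apply Finset.sum_congr rfl
        intro ω _
        rw [Finset.card_filter]
  _ = ∑ a ∈ B, ∑ ω ∈ (Finset.Ico 1 Q ×ˢ Finset.range Q),
          (if Bk Q M ω.1 ω.2 a % 4 = 0 then 1 else 0) := Finset.sum_comm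
  _ = ∑ a ∈ B, ((Finset.Ico 1 Q ×ˢ Finset.range Q).filter
          (fun ω => Bk Q M ω.1 ω.2 a % 4 = 0)).card := by
        apply Finset.sum_congr rfl
        intro a _
        rw [Finset.card_filter]
  _ = ∑ a ∈ B, ∑ l ∈ Finset.Ico 1 Q,
          ((Finset.range Q).filter (fun t => Bk Q M l t a % 4 = 0)).card := by
        apply Finset.sum_congr rfl
        intro a _
        exact card_filter_product _ _ _
  _ = ∑ a ∈ B, ∑ l ∈ Finset.Ico 1 Q,
          ((Finset.range Q).filter (fun x => x * M / Q % 4 = 0)).card := by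
        apply Finset.sum_congr rfl
        intro a _
        apply Finset.sum_congr rfl
        intro l _
        exact t_count Q (fun x => x * M / Q % 4 = 0) l a
  _ = B.card * ((Q - 1) *
          ((Finset.range Q).filter (fun x => x * M / Q % 4 = 0)).card) := by
        rw [Finset.sum_const, Finset.sum_const, Nat.card_Ico, smul_eq_mul, smul_eq_mul]

open Finset in
lemma sum_C (Q M : ℕ) [Fact (Nat.Prime Q)] (hM0 : 0 < M) (D : Finset (ℕ × ℕ))
    (hD : ∀ q ∈ D, q.1 < q.2 ∧ q.2 < Q) :
    M * ∑ ω ∈ (Finset.Ico 1 Q ×ˢ Finset.range Q),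
        (D.filter (fun q => Bk Q M ω.1 ω.2 q.1 = Bk Q M ω.1 ω.2 q.2)).card
      ≤ D.card * (2 * Q * Q) := by
  classical
  have hswap : ∑ ω ∈ (Finset.Ico 1 Q ×ˢ Finset.range Q),
      (D.filter (fun q => Bk Q M ω.1 ω.2 q.1 = Bk Q M ω.1 ω.2 q.2)).card
      = ∑ q ∈ D, ((Finset.Ico 1 Q ×ˢ Finset.range Q).filter
          (fun ω => Bk Q M ω.1 ω.2 q.1 = Bk Q M ω.1 ω.2 q.2)).card := by
    calc _ = ∑ ω ∈ (Finset.Ico 1 Q ×ˢ Finset.range Q), ∑ q ∈ D,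
          (if Bk Q M ω.1 ω.2 q.1 = Bk Q M ω.1 ω.2 q.2 then 1 else 0) := by
            apply Finset.sum_congr rfl
            intro ω _
            rw [Finset.card_filter]
    _ = ∑ q ∈ D, ∑ ω ∈ (Finset.Ico 1 Q ×ˢ Finset.range Q),
          (if Bk Q M ω.1 ω.2 q.1 = Bk Q M ω.1 ω.2 q.2 then 1 else 0) := Finset.sum_comm
    _ = _ := by
            apply Finset.sum_congr rfl
            intro q _
            rw [Finset.card_filter]
  rw [hswap, Finset.mul_sum]
  calc ∑ q ∈ D, M * ((Finset.Ico 1 Q ×ˢ Finset.range Q).filter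
          (fun ω => Bk Q M ω.1 ω.2 q.1 = Bk Q M ω.1 ω.2 q.2)).card
      ≤ ∑ _q ∈ D, 2 * Q * Q := by
        apply Finset.sum_le_sum
        intro q hq
        exact pair_count Q M hM0 q.1 q.2 (hD q hq).1 (hD q hq).2
  _ = D.card * (2 * Q * Q) := by rw [Finset.sum_const, smul_eq_mul]

lemma natCast_small_inj (p x y : ℕ) (hx : x < p) (hy : y < p)
    (h : (x : ZMod p) = (y : ZMod p)) : x = y := by
  have h1 : x % p = y % p := (ZMod.natCast_eq_natCast_iff x y p).1 h
  rw [Nat.mod_eq_of_lt hx, Nat.mod_eq_of_lt hy] at h1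
  exact h1

lemma Bk_lt (Q M : ℕ) [NeZero Q] (hM : 0 < M) (l t a : ℕ) : Bk Q M l t a < M := by
  have hQ0 : 0 < Q := Nat.pos_of_ne_zero (NeZero.ne Q)
  unfold Bk
  rw [Nat.div_lt_iff_lt_mul hQ0]
  have h1 : Xv Q l t a < Q := Xv_lt Q l t a
  calc Xv Q l t a * M < Q * M := by
        exact Nat.mul_lt_mul_of_lt_of_le h1 (le_refl M) hM
  _ = M * Q := by ring

lemma Xv_cast (Q l t a : ℕ) [NeZero Q] :
    ((Xv Q l t a : ℕ) : ZMod Q) = ((l * a + t : ℕ) : ZMod Q) := by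
  unfold Xv
  rw [ZMod.natCast_val, ZMod.cast_id]

lemma hBkaux (Q M : ℕ) (l1 t1 a : ℕ) :
    (Xv Q l1 t1 a : ℤ) * (M : ℤ) / (Q : ℤ) = ((Bk Q M l1 t1 a : ℕ) : ℤ) := by
  rw [← Nat.cast_mul]
  rfl

lemma bridge (Q M p : ℕ) [NeZero Q] (hM : M = 4 * p) (hp : 0 < p)
    (l1 t1 : ℕ) (k l u v : ℕ) (hkv : k + v = l + u)
    (h1 : Bk Q M l1 t1 k % 4 = 0) (h2 : Bk Q M l1 t1 l % 4 = 0)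
    (h3 : Bk Q M l1 t1 u % 4 = 0) (h4 : Bk Q M l1 t1 v % 4 = 0) :
    ((Bk Q M l1 t1 k / 4 : ℕ) : ZMod p) + ((Bk Q M l1 t1 v / 4 : ℕ) : ZMod p)
      = ((Bk Q M l1 t1 l / 4 : ℕ) : ZMod p) + ((Bk Q M l1 t1 u / 4 : ℕ) : ZMod p) := by
  have hQ0 : 0 < Q := Nat.pos_of_ne_zero (NeZero.ne Q)
  have hM0 : 0 < M := by omega
  have hcongZ : ((Xv Q l1 t1 k + Xv Q l1 t1 v : ℕ) : ZMod Q)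
      = ((Xv Q l1 t1 l + Xv Q l1 t1 u : ℕ) : ZMod Q) := by
    rw [Nat.cast_add, Nat.cast_add, Xv_cast, Xv_cast, Xv_cast, Xv_cast]
    have hsum : ((k : ZMod Q) + (v : ZMod Q)) = ((l : ZMod Q) + (u : ZMod Q)) := by
      have := congrArg (fun x : ℕ => (x : ZMod Q)) hkv
      push_cast at this
      exact this
    push_cast
    linear_combination (l1 : ZMod Q) * hsum
  have hmodeq : (Xv Q l1 t1 k + Xv Q l1 t1 v) ≡ (Xv Q l1 t1 l + Xv Q l1 t1 u) [MOD Q] :=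
    (ZMod.natCast_eq_natCast_iff _ _ _).1 hcongZ
  have hdvd0 := hmodeq.dvd
  have hdvd : (Q : ℤ) ∣ ((Xv Q l1 t1 k : ℤ) + (Xv Q l1 t1 v : ℤ))
      - ((Xv Q l1 t1 l : ℤ) + (Xv Q l1 t1 u : ℤ)) := by
    obtain ⟨c, hc⟩ := hdvd0
    exact ⟨-c, by push_cast at hc ⊢; linarith⟩
  have harc := arc_lemma (Q : ℤ) (M : ℤ) (by exact_mod_cast hQ0) (by exact_mod_cast hM0)
    (by rw [hM]; push_cast; exact dvd_mul_right 4 (p:ℤ))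
    (Xv Q l1 t1 k : ℤ) (Xv Q l1 t1 l : ℤ) (Xv Q l1 t1 u : ℤ) (Xv Q l1 t1 v : ℤ)
    (by positivity) (by exact_mod_cast Xv_lt Q l1 t1 k)
    (by positivity) (by exact_mod_cast Xv_lt Q l1 t1 l)
    (by positivity) (by exact_mod_cast Xv_lt Q l1 t1 u)
    (by positivity) (by exact_mod_cast Xv_lt Q l1 t1 v)
    hdvd ?_ ?_ ?_ ?_
  rotate_left
  · rw [hBkaux Q M l1 t1 k]
    exact_mod_cast (Nat.dvd_of_mod_eq_zero h1)
  · rw [hBkaux Q M l1 t1 l]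
    exact_mod_cast (Nat.dvd_of_mod_eq_zero h2)
  · rw [hBkaux Q M l1 t1 u]
    exact_mod_cast (Nat.dvd_of_mod_eq_zero h3)
  · rw [hBkaux Q M l1 t1 v]
    exact_mod_cast (Nat.dvd_of_mod_eq_zero h4)
  rw [hBkaux Q M l1 t1 k, hBkaux Q M l1 t1 l, hBkaux Q M l1 t1 u, hBkaux Q M l1 t1 v] at harc
  have hq : ∀ a : ℕ, Bk Q M l1 t1 a % 4 = 0 →
      ((Bk Q M l1 t1 a : ℕ) : ℤ) = 4 * ((Bk Q M l1 t1 a / 4 : ℕ) : ℤ) := by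
    intro a ha
    exact_mod_cast (by omega : Bk Q M l1 t1 a = 4 * (Bk Q M l1 t1 a / 4))
  rw [hq k h1, hq l h2, hq u h3, hq v h4] at harc
  have hM4 : (M : ℤ) = 4 * (p : ℤ) := by exact_mod_cast hM
  rw [hM4] at harc
  obtain ⟨c, hc⟩ := harc
  have hpdvd : (p : ℤ) ∣ (((Bk Q M l1 t1 k / 4 : ℕ) : ℤ) + ((Bk Q M l1 t1 v / 4 : ℕ) : ℤ))
      - (((Bk Q M l1 t1 l / 4 : ℕ) : ℤ) + ((Bk Q M l1 t1 u / 4 : ℕ) : ℤ)) := by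
    refine ⟨c, by linarith⟩
  have hz := (ZMod.intCast_zmod_eq_zero_iff_dvd _ p).2 hpdvd
  simp only [Int.cast_sub, Int.cast_add, Int.cast_natCast] at hz
  linear_combination hz

open Finset in
lemma parab_pigeonhole (p : ℕ) [Fact (Nat.Prime p)] (W : Finset ℕ) (g1 g2 : ℕ → ZMod p) :
    ∃ c e : ZMod p, W.card ≤ p * (W.filter (fun a => g2 a = g1 a ^ 2 + c * g1 a + e)).card := by
  classical
  haveI : NeZero p := ⟨(Fact.out : Nat.Prime p).ne_zero⟩
  by_contra hcon
  push_neg at hcon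
  have hcount : ∀ a : ℕ, (((univ : Finset (ZMod p)) ×ˢ (univ : Finset (ZMod p))).filter
      (fun ce => g2 a = g1 a ^ 2 + ce.1 * g1 a + ce.2)).card = p := by
    intro a
    have hset : (((univ : Finset (ZMod p)) ×ˢ (univ : Finset (ZMod p))).filter
        (fun ce => g2 a = g1 a ^ 2 + ce.1 * g1 a + ce.2))
        = (univ : Finset (ZMod p)).image (fun c => (c, g2 a - g1 a ^ 2 - c * g1 a)) := by
      ext ⟨c, e⟩
      simp only [Finset.mem_filter, Finset.mem_product, Finset.mem_univ, true_and,
        Finset.mem_image, Prod.mk.injEq]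
      constructor
      · intro he
        exact ⟨c, rfl, by linear_combination he⟩
      · rintro ⟨c', hc1, hc2⟩
        subst hc1
        linear_combination hc2
    rw [hset, Finset.card_image_of_injective _ (fun c c' h => (Prod.ext_iff.1 h).1),
      Finset.card_univ, ZMod.card]
  have hsum : ∑ ce ∈ ((univ : Finset (ZMod p)) ×ˢ (univ : Finset (ZMod p))),
      (W.filter (fun a => g2 a = g1 a ^ 2 + ce.1 * g1 a + ce.2)).card = W.card * p := by
    calc ∑ ce ∈ ((univ : Finset (ZMod p)) ×ˢ (univ : Finset (ZMod p))),
        (W.filter (fun a => g2 a = g1 a ^ 2 + ce.1 * g1 a + ce.2)).card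
        = ∑ ce ∈ ((univ : Finset (ZMod p)) ×ˢ (univ : Finset (ZMod p))), ∑ a ∈ W,
            (if g2 a = g1 a ^ 2 + ce.1 * g1 a + ce.2 then 1 else 0) := by
          apply Finset.sum_congr rfl; intro ce _; rw [Finset.card_filter]
    _ = ∑ a ∈ W, ∑ ce ∈ ((univ : Finset (ZMod p)) ×ˢ (univ : Finset (ZMod p))),
            (if g2 a = g1 a ^ 2 + ce.1 * g1 a + ce.2 then 1 else 0) := Finset.sum_comm
    _ = ∑ a ∈ W, (((univ : Finset (ZMod p)) ×ˢ (univ : Finset (ZMod p))).filter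
            (fun ce => g2 a = g1 a ^ 2 + ce.1 * g1 a + ce.2)).card := by
          apply Finset.sum_congr rfl; intro a _; rw [Finset.card_filter]
    _ = ∑ a ∈ W, p := by
          apply Finset.sum_congr rfl; intro a _; exact hcount a
    _ = W.card * p := by rw [Finset.sum_const, smul_eq_mul]
  have hp0 : 0 < p := (Fact.out : Nat.Prime p).pos
  have hne : (((univ : Finset (ZMod p)) ×ˢ (univ : Finset (ZMod p)))).Nonempty := by
    refine ⟨(0, 0), ?_⟩
    simp
  have hlt : ∑ ce ∈ ((univ : Finset (ZMod p)) ×ˢ (univ : Finset (ZMod p))),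
      p * (W.filter (fun a => g2 a = g1 a ^ 2 + ce.1 * g1 a + ce.2)).card
      < ∑ _ce ∈ ((univ : Finset (ZMod p)) ×ˢ (univ : Finset (ZMod p))), W.card :=
    Finset.sum_lt_sum_of_nonempty hne (fun ce _ => hcon ce.1 ce.2)
  rw [← Finset.mul_sum, hsum, Finset.sum_const, smul_eq_mul, Finset.card_product,
    Finset.card_univ, ZMod.card] at hlt
  have e1 : p * (W.card * p) = p * p * W.card := by ring
  rw [e1] at hlt
  exact lt_irrefl _ hlt

def SidonN (Z : Finset ℕ) : Prop :=
  ∀ k ∈ Z, ∀ l ∈ Z, ∀ u ∈ Z, ∀ v ∈ Z, k + v = l + u → k = l ∨ (k = u ∧ l = v)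

open Finset in
theorem kss (A : Finset ℕ) :
    ∃ Z ⊆ A, SidonN Z ∧ Real.sqrt A.card ≤ 14000 * Z.card := by
  classical
  rcases Nat.eq_zero_or_pos A.card with hm0 | hm1
  · refine ⟨∅, Finset.empty_subset _, ?_, ?_⟩
    · intro k hk; simp at hk
    · rw [hm0]; simp
  set m := A.card with hmdef
  -- parameters
  obtain ⟨p, hpprime, hps, hp2s⟩ := Nat.bertrand (100 * (Nat.sqrt m + 1)) (by positivity)
  haveI : Fact (Nat.Prime p) := ⟨hpprime⟩
  have hp0 : 0 < p := hpprime.pos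
  have hp100 : 100 < p := by omega
  obtain ⟨Q, hQge, hQprime⟩ := Nat.exists_infinite_primes (20 * (4*p) * (4*p) + (A.sup id) + 2)
  haveI : Fact (Nat.Prime Q) := ⟨hQprime⟩
  haveI : NeZero Q := ⟨hQprime.ne_zero⟩
  have hM0 : 0 < 4 * p := by omega
  have hAQ : ∀ a ∈ A, a < Q := by
    intro a ha
    have := Finset.le_sup (f := id) ha
    simp only [id] at this
    omega
  have hQ20 : 20 * (4*p) * (4*p) ≤ Q := by omega
  have hQ3 : 3 ≤ Q := by nlinarith
  have hQ0 : 0 < Q := by omega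
  have hg : Q ≤ 5 * ((Finset.range Q).filter (fun x => x * (4*p) / Q % 4 = 0)).card :=
    g_count Q (4*p) p hp0 rfl hQ20
  set g := ((Finset.range Q).filter (fun x => x * (4*p) / Q % 4 = 0)).card with hgdef
  set pairsA := (A ×ˢ A).filter (fun q : ℕ × ℕ => q.1 < q.2) with hpairsdef
  have hpairs_card : pairsA.card ≤ m * m := by
    calc pairsA.card ≤ (A ×ˢ A).card := Finset.card_filter_le _ _
    _ = m * m := by rw [Finset.card_product]
  have hpairsmem : ∀ q ∈ pairsA, q.1 ∈ A ∧ q.2 ∈ A ∧ q.1 < q.2 ∧ q.2 < Q := by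
    intro q hq
    rw [hpairsdef, Finset.mem_filter, Finset.mem_product] at hq
    exact ⟨hq.1.1, hq.1.2, hq.2, hAQ _ hq.1.2⟩
  -- abbreviations for sums
  set Ω := (Finset.Ico 1 Q ×ˢ Finset.range Q) with hΩdef
  have hΩcard : Ω.card = (Q - 1) * Q := by
    rw [hΩdef, Finset.card_product, Nat.card_Ico, Finset.card_range]
  set N := (Q - 1) * Q with hNdef
  have hN1 : 1 ≤ N := by
    rw [hNdef]
    exact Nat.mul_pos (by omega) (by omega)
  -- STEP 1 : find a good first coordinate
  have hstep1 : ∃ ω ∈ Ω,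
      m ≤ 6 * (A.filter (fun a => Bk Q (4*p) ω.1 ω.2 a % 4 = 0)).card ∧
      (4*p) * (pairsA.filter (fun q =>
        Bk Q (4*p) ω.1 ω.2 q.1 = Bk Q (4*p) ω.1 ω.2 q.2)).card ≤ 180 * (m * m) := by
    set Good := Ω.filter (fun ω =>
      m ≤ 6 * (A.filter (fun a => Bk Q (4*p) ω.1 ω.2 a % 4 = 0)).card) with hGooddef
    set Bad := Ω.filter (fun ω => 180 * (m * m) < (4*p) * (pairsA.filter (fun q =>
      Bk Q (4*p) ω.1 ω.2 q.1 = Bk Q (4*p) ω.1 ω.2 q.2)).card) with hBaddef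
    have hSG1 : ∑ ω ∈ Ω, (A.filter (fun a => Bk Q (4*p) ω.1 ω.2 a % 4 = 0)).card
        = m * ((Q - 1) * g) := sum_G Q (4*p) A
    have hSC1 : (4*p) * ∑ ω ∈ Ω, (pairsA.filter (fun q =>
        Bk Q (4*p) ω.1 ω.2 q.1 = Bk Q (4*p) ω.1 ω.2 q.2)).card ≤ (m * m) * (2 * Q * Q) := by
      calc (4*p) * ∑ ω ∈ Ω, (pairsA.filter (fun q =>
          Bk Q (4*p) ω.1 ω.2 q.1 = Bk Q (4*p) ω.1 ω.2 q.2)).card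
          ≤ pairsA.card * (2 * Q * Q) :=
            sum_C Q (4*p) hM0 pairsA (fun q hq => ⟨(hpairsmem q hq).2.2.1, (hpairsmem q hq).2.2.2⟩)
      _ ≤ (m * m) * (2 * Q * Q) := Nat.mul_le_mul_right _ hpairs_card
    -- Good is big
    have hGoodN : N ≤ 30 * Good.card := by
      have hsplit := Finset.sum_filter_add_sum_filter_not Ω
        (fun ω => m ≤ 6 * (A.filter (fun a => Bk Q (4*p) ω.1 ω.2 a % 4 = 0)).card)
        (fun ω => (A.filter (fun a => Bk Q (4*p) ω.1 ω.2 a % 4 = 0)).card)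
      have h1 : ∑ ω ∈ Good, (A.filter (fun a => Bk Q (4*p) ω.1 ω.2 a % 4 = 0)).card
          ≤ Good.card * m := by
        have := Finset.sum_le_card_nsmul Good
          (fun ω => (A.filter (fun a => Bk Q (4*p) ω.1 ω.2 a % 4 = 0)).card) m
          (fun ω _ => Finset.card_filter_le _ _)
        simpa [smul_eq_mul] using this
      have h2 : ∑ ω ∈ Ω.filter (fun ω => ¬ (m ≤ 6 * (A.filter
            (fun a => Bk Q (4*p) ω.1 ω.2 a % 4 = 0)).card)),
          (6 * (A.filter (fun a => Bk Q (4*p) ω.1 ω.2 a % 4 = 0)).card)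
          ≤ N * (m - 1) := by
        calc ∑ ω ∈ Ω.filter (fun ω => ¬ (m ≤ 6 * (A.filter
              (fun a => Bk Q (4*p) ω.1 ω.2 a % 4 = 0)).card)),
            (6 * (A.filter (fun a => Bk Q (4*p) ω.1 ω.2 a % 4 = 0)).card)
            ≤ (Ω.filter (fun ω => ¬ (m ≤ 6 * (A.filter
              (fun a => Bk Q (4*p) ω.1 ω.2 a % 4 = 0)).card))).card * (m - 1) := by
              have := Finset.sum_le_card_nsmul (Ω.filter (fun ω => ¬ (m ≤ 6 * (A.filter
                  (fun a => Bk Q (4*p) ω.1 ω.2 a % 4 = 0)).card)))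
                (fun ω => 6 * (A.filter (fun a => Bk Q (4*p) ω.1 ω.2 a % 4 = 0)).card) (m - 1)
                (fun ω hω => by
                  rw [Finset.mem_filter] at hω
                  show 6 * (A.filter (fun a => Bk Q (4*p) ω.1 ω.2 a % 4 = 0)).card ≤ m - 1
                  omega)
              simpa [smul_eq_mul] using this
        _ ≤ N * (m - 1) := by
              apply Nat.mul_le_mul_right
              calc _ ≤ Ω.card := Finset.card_filter_le _ _
              _ = N := hΩcard
      -- lower bound on the total sum
      have h3 : 6 * (m * N) ≤ 30 * (m * ((Q-1) * g)) := by
        have : 6 * (m * ((Q-1) * Q)) ≤ 6 * (m * ((Q-1) * (5 * g))) := by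
          apply Nat.mul_le_mul_left
          apply Nat.mul_le_mul_left
          exact Nat.mul_le_mul_left _ hg
        calc 6 * (m * N) = 6 * (m * ((Q-1) * Q)) := by rw [hNdef]
        _ ≤ 6 * (m * ((Q-1) * (5 * g))) := this
        _ = 30 * (m * ((Q-1) * g)) := by ring
      -- combine
      have h4 : 6 * (m * N) ≤ 30 * (Good.card * m) + 5 * (N * (m - 1)) := by
        have e := hsplit
        -- 30 * total = 30 * (goodsum + badsum)
        have h5 : 30 * (m * ((Q-1) * g)) =
            30 * (∑ ω ∈ Good, (A.filter (fun a => Bk Q (4*p) ω.1 ω.2 a % 4 = 0)).card)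
            + 30 * (∑ ω ∈ Ω.filter (fun ω => ¬ (m ≤ 6 * (A.filter
              (fun a => Bk Q (4*p) ω.1 ω.2 a % 4 = 0)).card)),
              (A.filter (fun a => Bk Q (4*p) ω.1 ω.2 a % 4 = 0)).card) := by
          rw [← Nat.mul_add]
          rw [hGooddef]
          rw [e, hSG1]
        have h6 : 30 * (∑ ω ∈ Ω.filter (fun ω => ¬ (m ≤ 6 * (A.filter
              (fun a => Bk Q (4*p) ω.1 ω.2 a % 4 = 0)).card)),
              (A.filter (fun a => Bk Q (4*p) ω.1 ω.2 a % 4 = 0)).card)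
            = 5 * ∑ ω ∈ Ω.filter (fun ω => ¬ (m ≤ 6 * (A.filter
              (fun a => Bk Q (4*p) ω.1 ω.2 a % 4 = 0)).card)),
              (6 * (A.filter (fun a => Bk Q (4*p) ω.1 ω.2 a % 4 = 0)).card) := by
          rw [Finset.mul_sum, Finset.mul_sum]
          apply Finset.sum_congr rfl
          intro ω _
          ring
        have h7 := Nat.mul_le_mul_left 5 h2
        omega
      -- cancel m
      have e1 : N * (m - 1) + N = N * m := by
        rw [← Nat.mul_succ]
        congr 1
        omega
      have e2 : m * N = N * m := Nat.mul_comm _ _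
      have e3 : (30 * Good.card) * m = 30 * (Good.card * m) := by ring
      have h8 : N * m ≤ (30 * Good.card) * m := by omega
      exact Nat.le_of_mul_le_mul_right h8 hm1
    -- Bad is small
    have hBadN : 60 * Bad.card ≤ N := by
      have h1 : Bad.card * (180 * (m * m) + 1) ≤ (m * m) * (2 * Q * Q) := by
        calc Bad.card * (180 * (m * m) + 1)
            = Bad.card • (180 * (m * m) + 1) := by rw [smul_eq_mul]
        _ ≤ ∑ ω ∈ Bad, (4*p) * (pairsA.filter (fun q =>
              Bk Q (4*p) ω.1 ω.2 q.1 = Bk Q (4*p) ω.1 ω.2 q.2)).card := by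
              apply Finset.card_nsmul_le_sum
              intro ω hω
              rw [hBaddef, Finset.mem_filter] at hω
              omega
        _ ≤ ∑ ω ∈ Ω, (4*p) * (pairsA.filter (fun q =>
              Bk Q (4*p) ω.1 ω.2 q.1 = Bk Q (4*p) ω.1 ω.2 q.2)).card := by
              apply Finset.sum_le_sum_of_subset
              rw [hBaddef]
              exact Finset.filter_subset _ _
        _ = (4*p) * ∑ ω ∈ Ω, (pairsA.filter (fun q =>
              Bk Q (4*p) ω.1 ω.2 q.1 = Bk Q (4*p) ω.1 ω.2 q.2)).card := by
              rw [Finset.mul_sum]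
        _ ≤ (m * m) * (2 * Q * Q) := hSC1
      have h2 : (m * m) * (2 * Q * Q) ≤ (m * m) * (3 * N) := by
        apply Nat.mul_le_mul_left
        have e : (Q - 1) * Q = Q * Q - Q := by rw [Nat.sub_mul, one_mul]
        have e2 : 3 * Q ≤ Q * Q := Nat.mul_le_mul_right Q hQ3
        rw [hNdef, e, show 2*Q*Q = 2*(Q*Q) from by ring]
        omega
      have e1 : Bad.card * (180 * (m * m) + 1) = 180 * (Bad.card * (m * m)) + Bad.card := by
        ring
      have e2 : (60 * Bad.card) * (3 * (m * m)) = 180 * (Bad.card * (m * m)) := by ring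
      have e3 : N * (3 * (m * m)) = (m * m) * (3 * N) := by ring
      have h3 : (60 * Bad.card) * (3 * (m * m)) ≤ N * (3 * (m * m)) := by omega
      exact Nat.le_of_mul_le_mul_right h3 (Nat.mul_pos (by omega) (Nat.mul_pos hm1 hm1))
    have hGB : Bad.card < Good.card := by omega
    have hne : (Good \ Bad).Nonempty := by
      rw [← Finset.card_pos]
      have := Finset.le_card_sdiff Bad Good
      omega
    obtain ⟨ω, hω⟩ := hne
    rw [Finset.mem_sdiff] at hω
    obtain ⟨hωG, hωB⟩ := hω
    rw [hGooddef, Finset.mem_filter] at hωG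
    rw [hBaddef, Finset.mem_filter] at hωB
    refine ⟨ω, hωG.1, hωG.2, ?_⟩
    by_contra hcon
    exact hωB ⟨hωG.1, by omega⟩
  obtain ⟨⟨l1, t1⟩, hω1Ω, hG1, hC1⟩ := hstep1
  have hG1' : m ≤ 6 * (A.filter (fun a => Bk Q (4*p) l1 t1 a % 4 = 0)).card := hG1
  have hC1'' : (4*p) * (pairsA.filter (fun q =>
      Bk Q (4*p) l1 t1 q.1 = Bk Q (4*p) l1 t1 q.2)).card ≤ 180 * (m * m) := hC1
  clear hC1
  set A1 := A.filter (fun a => Bk Q (4*p) l1 t1 a % 4 = 0) with hA1def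
  set D1 := pairsA.filter (fun q =>
    Bk Q (4*p) l1 t1 q.1 = Bk Q (4*p) l1 t1 q.2) with hD1def
  have hD1mem : ∀ q ∈ D1, q.1 < q.2 ∧ q.2 < Q := by
    intro q hq
    rw [hD1def, Finset.mem_filter] at hq
    exact ⟨(hpairsmem q hq.1).2.2.1, (hpairsmem q hq.1).2.2.2⟩
  -- STEP 2
  have hstep2 : ∃ ω ∈ Ω,
      35 * (D1.filter (fun q => Bk Q (4*p) ω.1 ω.2 q.1 = Bk Q (4*p) ω.1 ω.2 q.2)).card + m
        ≤ 35 * (A1.filter (fun a => Bk Q (4*p) ω.1 ω.2 a % 4 = 0)).card := by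
    by_contra hno
    push_neg at hno
    have hsum_all : ∑ ω ∈ Ω,
        (35 * (A1.filter (fun a => Bk Q (4*p) ω.1 ω.2 a % 4 = 0)).card + 1)
        ≤ ∑ ω ∈ Ω, (35 * (D1.filter (fun q =>
          Bk Q (4*p) ω.1 ω.2 q.1 = Bk Q (4*p) ω.1 ω.2 q.2)).card + m) := by
      apply Finset.sum_le_sum
      intro ω hω
      have := hno ω hω
      omega
    have hL : ∑ ω ∈ Ω,
        (35 * (A1.filter (fun a => Bk Q (4*p) ω.1 ω.2 a % 4 = 0)).card + 1)
        = 35 * (∑ ω ∈ Ω, (A1.filter (fun a => Bk Q (4*p) ω.1 ω.2 a % 4 = 0)).card) + N := by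
      rw [Finset.sum_add_distrib, ← Finset.mul_sum, Finset.sum_const, smul_eq_mul,
        mul_one, hΩcard]
    have hR : ∑ ω ∈ Ω, (35 * (D1.filter (fun q =>
          Bk Q (4*p) ω.1 ω.2 q.1 = Bk Q (4*p) ω.1 ω.2 q.2)).card + m)
        = 35 * (∑ ω ∈ Ω, (D1.filter (fun q =>
          Bk Q (4*p) ω.1 ω.2 q.1 = Bk Q (4*p) ω.1 ω.2 q.2)).card) + N * m := by
      rw [Finset.sum_add_distrib, ← Finset.mul_sum, Finset.sum_const, smul_eq_mul, hΩcard]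
    have hSG2 : ∑ ω ∈ Ω, (A1.filter (fun a => Bk Q (4*p) ω.1 ω.2 a % 4 = 0)).card
        = A1.card * ((Q - 1) * g) := sum_G Q (4*p) A1
    have hSC2 : (4*p) * ∑ ω ∈ Ω, (D1.filter (fun q =>
        Bk Q (4*p) ω.1 ω.2 q.1 = Bk Q (4*p) ω.1 ω.2 q.2)).card ≤ D1.card * (2 * Q * Q) :=
      sum_C Q (4*p) hM0 D1 hD1mem
    -- lower bound
    have k1 : m * N ≤ 30 * (∑ ω ∈ Ω, (A1.filter
        (fun a => Bk Q (4*p) ω.1 ω.2 a % 4 = 0)).card) := by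
      have c1 : m * ((Q-1)*Q) ≤ (6 * A1.card) * ((Q-1)*Q) :=
        Nat.mul_le_mul_right _ hG1'
      have c2 : (6 * A1.card) * ((Q-1)*Q) ≤ (6 * A1.card) * ((Q-1)*(5*g)) := by
        apply Nat.mul_le_mul_left
        exact Nat.mul_le_mul_left _ hg
      have c3 : (6 * A1.card) * ((Q-1)*(5*g)) = 30 * (A1.card * ((Q-1) * g)) := by ring
      rw [hSG2, hNdef]
      omega
    -- upper bound
    have k2 : 160000 * (∑ ω ∈ Ω, (D1.filter (fun q =>
        Bk Q (4*p) ω.1 ω.2 q.1 = Bk Q (4*p) ω.1 ω.2 q.2)).card) ≤ 540 * (N * m) := by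
      have c1 : (4*p) * ((4*p) * ∑ ω ∈ Ω, (D1.filter (fun q =>
          Bk Q (4*p) ω.1 ω.2 q.1 = Bk Q (4*p) ω.1 ω.2 q.2)).card)
          ≤ (4*p) * (D1.card * (2 * Q * Q)) := Nat.mul_le_mul_left _ hSC2
      have c2 : (4*p) * (D1.card * (2 * Q * Q)) = (2*Q*Q) * ((4*p) * D1.card) := by ring
      have c3 : (2*Q*Q) * ((4*p) * D1.card) ≤ (2*Q*Q) * (180 * (m*m)) :=
        Nat.mul_le_mul_left _ hC1''
      have c4 : (2*Q*Q) * (180 * (m*m)) ≤ (3*N) * (180 * (m*m)) := by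
        apply Nat.mul_le_mul_right
        have e : (Q - 1) * Q = Q * Q - Q := by rw [Nat.sub_mul, one_mul]
        have e2 : 3 * Q ≤ Q * Q := Nat.mul_le_mul_right Q hQ3
        rw [hNdef, e, show 2*Q*Q = 2*(Q*Q) from by ring]
        omega
      -- and 16 p^2 ≥ 160000 m
      have hpsq : 160000 * m ≤ 16 * (p * p) := by
        have h1 : m < (Nat.sqrt m + 1) * (Nat.sqrt m + 1) := Nat.lt_succ_sqrt m
        have h2 : 100 * (Nat.sqrt m + 1) ≤ p := by omega
        have h3 : (100 * (Nat.sqrt m + 1)) * (100 * (Nat.sqrt m + 1)) ≤ p * p :=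
          Nat.mul_le_mul h2 h2
        have h4 : (100 * (Nat.sqrt m + 1)) * (100 * (Nat.sqrt m + 1))
            = 10000 * ((Nat.sqrt m + 1) * (Nat.sqrt m + 1)) := by ring
        omega
      -- combine : 160000 * m * Σ ≤ 16 p p Σ = (4p)(4p)Σ ≤ 540 N m m
      set S2 := ∑ ω ∈ Ω, (D1.filter (fun q =>
        Bk Q (4*p) ω.1 ω.2 q.1 = Bk Q (4*p) ω.1 ω.2 q.2)).card with hS2def
      have c5 : (160000 * m) * S2 ≤ (16 * (p * p)) * S2 :=
        Nat.mul_le_mul_right _ hpsq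
      have c6 : (16 * (p * p)) * S2 = (4*p) * ((4*p) * S2) := by ring
      have c7 : (160000 * m) * S2 ≤ (3*N) * (180 * (m*m)) := by omega
      have c8 : (3*N) * (180 * (m*m)) = (540 * (N * m)) * m := by ring
      have c9 : (160000 * m) * S2 = (160000 * S2) * m := by ring
      have c10 : (160000 * S2) * m ≤ (540 * (N * m)) * m := by omega
      exact Nat.le_of_mul_le_mul_right c10 hm1
    -- contradiction
    rw [hL, hR] at hsum_all
    have hNm1 : 1 ≤ N * m := Nat.mul_pos hN1 hm1
    have hcomm : m * N = N * m := Nat.mul_comm _ _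
    omega
  obtain ⟨⟨l2, t2⟩, hω2Ω, hs2⟩ := hstep2
  have hs2' : 35 * (D1.filter (fun q =>
      Bk Q (4*p) l2 t2 q.1 = Bk Q (4*p) l2 t2 q.2)).card + m
      ≤ 35 * (A1.filter (fun a => Bk Q (4*p) l2 t2 a % 4 = 0)).card := hs2
  set A2 := A1.filter (fun a => Bk Q (4*p) l2 t2 a % 4 = 0) with hA2def
  set D2 := D1.filter (fun q =>
    Bk Q (4*p) l2 t2 q.1 = Bk Q (4*p) l2 t2 q.2) with hD2def
  have hA2subA : A2 ⊆ A := by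
    rw [hA2def, hA1def]
    exact subset_trans (Finset.filter_subset _ _) (Finset.filter_subset _ _)
  -- remove collisions
  set W := A2.filter (fun a => ∀ a' ∈ A2, a' < a →
    ¬(Bk Q (4*p) l1 t1 a' = Bk Q (4*p) l1 t1 a ∧
      Bk Q (4*p) l2 t2 a' = Bk Q (4*p) l2 t2 a)) with hWdef
  have hrem : (A2.filter (fun a => ¬ (∀ a' ∈ A2, a' < a →
      ¬(Bk Q (4*p) l1 t1 a' = Bk Q (4*p) l1 t1 a ∧
        Bk Q (4*p) l2 t2 a' = Bk Q (4*p) l2 t2 a)))).card ≤ D2.card := by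
    apply Finset.card_le_card_of_injOn (fun a =>
      (if h : (A2.filter (fun a' => a' < a ∧
          Bk Q (4*p) l1 t1 a' = Bk Q (4*p) l1 t1 a ∧
          Bk Q (4*p) l2 t2 a' = Bk Q (4*p) l2 t2 a)).Nonempty
        then ((A2.filter (fun a' => a' < a ∧
          Bk Q (4*p) l1 t1 a' = Bk Q (4*p) l1 t1 a ∧
          Bk Q (4*p) l2 t2 a' = Bk Q (4*p) l2 t2 a)).min' h) else 0, a))
    · intro a ha
      simp only [Finset.mem_coe] at ha ⊢
      rw [Finset.mem_filter] at ha
      obtain ⟨haA2, hbad⟩ := ha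
      push_neg at hbad
      obtain ⟨a', ha'A2, ha'lt, heq⟩ := hbad
      have hTne : (A2.filter (fun a' => a' < a ∧
          Bk Q (4*p) l1 t1 a' = Bk Q (4*p) l1 t1 a ∧
          Bk Q (4*p) l2 t2 a' = Bk Q (4*p) l2 t2 a)).Nonempty := by
        refine ⟨a', ?_⟩
        rw [Finset.mem_filter]
        exact ⟨ha'A2, ha'lt, heq⟩
      rw [dif_pos hTne]
      have hmin := Finset.min'_mem _ hTne
      rw [Finset.mem_filter] at hmin
      obtain ⟨hwA2, hwlt, hw1, hw2⟩ := hmin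
      rw [hD2def, Finset.mem_filter]
      constructor
      · rw [hD1def, Finset.mem_filter]
        constructor
        · rw [hpairsdef, Finset.mem_filter, Finset.mem_product]
          exact ⟨⟨hA2subA hwA2, hA2subA haA2⟩, hwlt⟩
        · exact hw1
      · exact hw2
    · intro a ha b hb heq
      exact (Prod.ext_iff.1 heq).2
  have hWsplit := Finset.card_filter_add_card_filter_not
    (s := A2) (p := fun a => ∀ a' ∈ A2, a' < a →
      ¬(Bk Q (4*p) l1 t1 a' = Bk Q (4*p) l1 t1 a ∧
        Bk Q (4*p) l2 t2 a' = Bk Q (4*p) l2 t2 a))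
  rw [← hWdef] at hWsplit
  have hW35 : m ≤ 35 * W.card := by
    have h1 : W.card + D2.card ≥ A2.card := by omega
    omega
  -- basic facts about W
  have hWsubA2 : W ⊆ A2 := by rw [hWdef]; exact Finset.filter_subset _ _
  have hWgood : ∀ a ∈ W, a ∈ A ∧ Bk Q (4*p) l1 t1 a % 4 = 0 ∧ Bk Q (4*p) l2 t2 a % 4 = 0 := by
    intro a ha
    have h2 := hWsubA2 ha
    rw [hA2def, Finset.mem_filter] at h2
    have h3 := h2.1
    rw [hA1def, Finset.mem_filter] at h3
    exact ⟨h3.1, h3.2, h2.2⟩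
  have hWinj : ∀ a ∈ W, ∀ b ∈ W,
      Bk Q (4*p) l1 t1 a = Bk Q (4*p) l1 t1 b →
      Bk Q (4*p) l2 t2 a = Bk Q (4*p) l2 t2 b → a = b := by
    intro a ha b hb h1 h2
    rcases lt_trichotomy a b with h | h | h
    · exfalso
      have hbW := ha
      rw [hWdef, Finset.mem_filter] at hb
      exact hb.2 a (hWsubA2 ha) h ⟨h1, h2⟩
    · exact h
    · exfalso
      rw [hWdef, Finset.mem_filter] at ha
      exact ha.2 b (hWsubA2 hb) h ⟨h1.symm, h2.symm⟩
  -- parabola extraction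
  set g1 : ℕ → ZMod p := fun a => ((Bk Q (4*p) l1 t1 a / 4 : ℕ) : ZMod p) with hg1def
  set g2 : ℕ → ZMod p := fun a => ((Bk Q (4*p) l2 t2 a / 4 : ℕ) : ZMod p) with hg2def
  obtain ⟨c, e, hce⟩ := parab_pigeonhole p W g1 g2
  set Z := W.filter (fun a => g2 a = g1 a ^ 2 + c * g1 a + e) with hZdef
  have hZW : Z ⊆ W := by rw [hZdef]; exact Finset.filter_subset _ _
  have hginj : ∀ a ∈ W, ∀ b ∈ W, g1 a = g1 b → g2 a = g2 b → a = b := by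
    intro a ha b hb h1 h2
    have key : ∀ l' t' : ℕ,
        ((Bk Q (4*p) l' t' a / 4 : ℕ) : ZMod p) = ((Bk Q (4*p) l' t' b / 4 : ℕ) : ZMod p) →
        Bk Q (4*p) l' t' a % 4 = 0 → Bk Q (4*p) l' t' b % 4 = 0 →
        Bk Q (4*p) l' t' a = Bk Q (4*p) l' t' b := by
      intro l' t' hcast hga hgb
      have hla : Bk Q (4*p) l' t' a < 4*p := Bk_lt Q (4*p) hM0 l' t' a
      have hlb : Bk Q (4*p) l' t' b < 4*p := Bk_lt Q (4*p) hM0 l' t' b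
      have := natCast_small_inj p _ _ (by omega) (by omega) hcast
      omega
    exact hWinj a ha b hb
      (key l1 t1 h1 (hWgood a ha).2.1 (hWgood b hb).2.1)
      (key l2 t2 h2 (hWgood a ha).2.2 (hWgood b hb).2.2)
  have hZsub : Z ⊆ A := fun a ha => (hWgood a (hZW ha)).1
  -- Sidon property
  have hsidon : SidonN Z := by
    intro k hk l hl u hu v hv hkv
    have hkW := hZW hk
    have hlW := hZW hl
    have huW := hZW hu
    have hvW := hZW hv
    have hpark : g2 k = g1 k ^ 2 + c * g1 k + e := by
      rw [hZdef, Finset.mem_filter] at hk; exact hk.2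
    have hparl : g2 l = g1 l ^ 2 + c * g1 l + e := by
      rw [hZdef, Finset.mem_filter] at hl; exact hl.2
    have hparu : g2 u = g1 u ^ 2 + c * g1 u + e := by
      rw [hZdef, Finset.mem_filter] at hu; exact hu.2
    have hparv : g2 v = g1 v ^ 2 + c * g1 v + e := by
      rw [hZdef, Finset.mem_filter] at hv; exact hv.2
    have hs1 : g1 k + g1 v = g1 l + g1 u :=
      bridge Q (4*p) p rfl hp0 l1 t1 k l u v hkv
        (hWgood k hkW).2.1 (hWgood l hlW).2.1 (hWgood u huW).2.1 (hWgood v hvW).2.1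
    have hs2b : g2 k + g2 v = g2 l + g2 u :=
      bridge Q (4*p) p rfl hp0 l2 t2 k l u v hkv
        (hWgood k hkW).2.2 (hWgood l hlW).2.2 (hWgood u huW).2.2 (hWgood v hvW).2.2
    have hgv : g1 v = g1 l + g1 u - g1 k := by linear_combination hs1
    have hquad : g1 k^2 + g1 v^2 - g1 l^2 - g1 u^2 = 0 := by
      linear_combination hs2b - hpark - hparv + hparl + hparu - c * hs1
    have hfact : ((g1 k - g1 l) * (g1 k - g1 u)) * 2 = 0 := by
      linear_combination hquad - (g1 v + (g1 l + g1 u - g1 k)) * hgv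
    have h2ne : (2 : ZMod p) ≠ 0 := by
      have h2' : ((2:ℕ) : ZMod p) ≠ 0 := by
        rw [Ne, ZMod.natCast_eq_zero_iff]
        intro hdvd
        have := Nat.le_of_dvd (by omega) hdvd
        omega
      exact_mod_cast h2'
    have hfact' : (g1 k - g1 l) * (g1 k - g1 u) = 0 := by
      rcases mul_eq_zero.1 hfact with h | h
      · exact h
      · exact absurd h h2ne
    rcases mul_eq_zero.1 hfact' with hcase | hcase
    · left
      have hgkl : g1 k = g1 l := by linear_combination hcase
      have hg2kl : g2 k = g2 l := by rw [hpark, hparl, hgkl]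
      exact hginj k hkW l hlW hgkl hg2kl
    · right
      have hgku : g1 k = g1 u := by linear_combination hcase
      have hglv : g1 l = g1 v := by linear_combination -hgv + hcase
      have hg2ku : g2 k = g2 u := by rw [hpark, hparu, hgku]
      have hg2lv : g2 l = g2 v := by rw [hparl, hparv, hglv]
      exact ⟨hginj k hkW u huW hgku hg2ku, hginj l hlW v hvW hglv hg2lv⟩
  refine ⟨Z, hZsub, hsidon, ?_⟩
  -- final numeric bound
  have hfin : m ≤ 35 * (p * Z.card) := by
    calc m ≤ 35 * W.card := hW35
    _ ≤ 35 * (p * Z.card) := Nat.mul_le_mul_left _ hce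
  have hm1' : (1:ℝ) ≤ (m:ℝ) := by exact_mod_cast hm1
  have hm0' : (0:ℝ) ≤ (m:ℝ) := by linarith
  have hsqm : ((Nat.sqrt m : ℕ) : ℝ) ≤ Real.sqrt m := by
    rw [Real.le_sqrt (by positivity) hm0']
    have : (Nat.sqrt m) * (Nat.sqrt m) ≤ m := Nat.sqrt_le m
    have h2 : ((Nat.sqrt m * Nat.sqrt m : ℕ) : ℝ) ≤ (m:ℝ) := by exact_mod_cast this
    calc ((Nat.sqrt m : ℕ) : ℝ)^2 = ((Nat.sqrt m * Nat.sqrt m : ℕ) : ℝ) := by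
          push_cast; ring
    _ ≤ (m:ℝ) := h2
  have hsq1 : (1:ℝ) ≤ Real.sqrt m := Real.one_le_sqrt.2 hm1'
  have hp_le : (p:ℝ) ≤ 400 * Real.sqrt m := by
    have h1 : (p:ℝ) ≤ 200 * (((Nat.sqrt m : ℕ) : ℝ) + 1) := by
      have : p ≤ 200 * (Nat.sqrt m + 1) := by omega
      exact_mod_cast this
    calc (p:ℝ) ≤ 200 * (((Nat.sqrt m : ℕ) : ℝ) + 1) := h1
    _ ≤ 200 * (Real.sqrt m + Real.sqrt m) := by
          apply mul_le_mul_of_nonneg_left _ (by norm_num)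
          linarith
    _ = 400 * Real.sqrt m := by ring
  have hZ0 : (0:ℝ) ≤ (Z.card : ℝ) := by positivity
  have hmain : (m:ℝ) ≤ 14000 * Real.sqrt m * Z.card := by
    have h1 : (m:ℝ) ≤ 35 * ((p:ℝ) * (Z.card:ℝ)) := by exact_mod_cast hfin
    calc (m:ℝ) ≤ 35 * ((p:ℝ) * (Z.card:ℝ)) := h1
    _ ≤ 35 * ((400 * Real.sqrt m) * (Z.card:ℝ)) := by
          apply mul_le_mul_of_nonneg_left _ (by norm_num)
          exact mul_le_mul_of_nonneg_right hp_le hZ0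
    _ = 14000 * Real.sqrt m * Z.card := by ring
  have hsqrtpos : (0:ℝ) < Real.sqrt m := by linarith
  have h2 : Real.sqrt m * Real.sqrt m ≤ (14000 * (Z.card:ℝ)) * Real.sqrt m := by
    rw [Real.mul_self_sqrt hm0']
    calc (m:ℝ) ≤ 14000 * Real.sqrt m * Z.card := hmain
    _ = (14000 * (Z.card:ℝ)) * Real.sqrt m := by ring
  exact le_of_mul_le_mul_right h2 hsqrtpos

/-- the standard chain point of weight `k` -/
def chainPt (n k : ℕ) : Fin n → ZMod 2 := fun i => if (i : ℕ) < k then 1 else 0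

lemma hamming_translate (n : ℕ) (x y t : Fin n → ZMod 2) :
    hammingDist (x + t) (y + t) = hammingDist x y := by
  unfold hammingDist
  congr 1
  apply Finset.filter_congr
  intro i _
  simp only [Pi.add_apply]
  constructor
  · intro h hc; exact h (by rw [hc])
  · intro h hc; exact h (add_right_cancel hc)

lemma chain_dist (n k l : ℕ) (hkl : k ≤ l) (hl : l ≤ n) :
    hammingDist (chainPt n k) (chainPt n l) = l - k := by
  unfold hammingDist
  have hcond : ∀ i : Fin n, (chainPt n k i ≠ chainPt n l i) ↔ (k ≤ (i:ℕ) ∧ (i:ℕ) < l) := by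
    intro i
    unfold chainPt
    by_cases h1 : (i:ℕ) < k
    · have h2 : (i:ℕ) < l := lt_of_lt_of_le h1 hkl
      rw [if_pos h1, if_pos h2]
      constructor
      · intro hh; exact absurd rfl hh
      · intro hh; omega
    · by_cases h2 : (i:ℕ) < l
      · rw [if_neg h1, if_pos h2]
        constructor
        · intro _; omega
        · intro _; exact zero_ne_one
      · rw [if_neg h1, if_neg h2]
        constructor
        · intro hh; exact absurd rfl hh
        · intro hh; omega
  rw [Finset.filter_congr (fun i _ => by rw [hcond i])]
  have : (Finset.univ.filter (fun i : Fin n => k ≤ (i:ℕ) ∧ (i:ℕ) < l)).card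
      = (Finset.Ico k l).card := by
    refine Finset.card_bij' (fun (i : Fin n) (_ : i ∈ _) => (i:ℕ))
      (fun a (ha : a ∈ Finset.Ico k l) =>
        (⟨a, lt_of_lt_of_le (Finset.mem_Ico.mp ha).2 hl⟩ : Fin n)) ?_ ?_ ?_ ?_
    · intro i hi
      rw [Finset.mem_filter] at hi
      rw [Finset.mem_Ico]
      exact hi.2
    · intro a ha
      rw [Finset.mem_filter]
      refine ⟨Finset.mem_univ _, ?_⟩
      have := Finset.mem_Ico.mp ha
      exact ⟨this.1, this.2⟩
    · intro i hi; rfl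
    · intro a ha; rfl
  rw [this, Nat.card_Ico]

lemma chainPt_inj (n k l : ℕ) (hk : k ≤ n) (hl : l ≤ n)
    (h : chainPt n k = chainPt n l) : k = l := by
  rcases lt_trichotomy k l with hc | hc | hc
  · exfalso
    have h1 : hammingDist (chainPt n k) (chainPt n l) = l - k :=
      chain_dist n k l (le_of_lt hc) hl
    rw [h, hammingDist_self] at h1
    omega
  · exact hc
  · exfalso
    have h1 : hammingDist (chainPt n l) (chainPt n k) = k - l :=
      chain_dist n l k (le_of_lt hc) hk
    rw [h, hammingDist_self] at h1
    omega

open Finset in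
lemma chain_avg (n : ℕ) (S : Finset (Fin n → ZMod 2)) :
    ∃ t : Fin n → ZMod 2, (n+1) * S.card
      ≤ 2^n * ((Finset.range (n+1)).filter (fun k => chainPt n k + t ∈ S)).card := by
  classical
  by_contra hcon
  push_neg at hcon
  have hself : ∀ (k : ℕ) (y : Fin n → ZMod 2), chainPt n k + (chainPt n k + y) = y := by
    intro k y
    funext i
    rw [Pi.add_apply, Pi.add_apply, ← add_assoc, CharTwo.add_self_eq_zero, zero_add]
  have hinner : ∀ k : ℕ, ((Finset.univ : Finset (Fin n → ZMod 2)).filter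
      (fun t => chainPt n k + t ∈ S)).card = S.card := by
    intro k
    apply Finset.card_bij' (fun t _ => chainPt n k + t) (fun s _ => chainPt n k + s)
    · intro t ht
      rw [Finset.mem_filter] at ht
      exact ht.2
    · intro s hs
      rw [Finset.mem_filter]
      refine ⟨Finset.mem_univ _, ?_⟩
      rw [hself k s]
      exact hs
    · intro t ht
      exact hself k t
    · intro s hs
      exact hself k s
  have hsum : ∑ t : (Fin n → ZMod 2), ((Finset.range (n+1)).filter
      (fun k => chainPt n k + t ∈ S)).card = (n+1) * S.card := by
    calc ∑ t : (Fin n → ZMod 2), ((Finset.range (n+1)).filter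
        (fun k => chainPt n k + t ∈ S)).card
        = ∑ t : (Fin n → ZMod 2), ∑ k ∈ Finset.range (n+1),
            (if chainPt n k + t ∈ S then 1 else 0) := by
          apply Finset.sum_congr rfl
          intro t _
          rw [Finset.card_filter]
    _ = ∑ k ∈ Finset.range (n+1), ∑ t : (Fin n → ZMod 2),
            (if chainPt n k + t ∈ S then 1 else 0) := Finset.sum_comm
    _ = ∑ k ∈ Finset.range (n+1), ((Finset.univ : Finset (Fin n → ZMod 2)).filter
            (fun t => chainPt n k + t ∈ S)).card := by
          apply Finset.sum_congr rfl
          intro k _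
          rw [Finset.card_filter]
    _ = ∑ k ∈ Finset.range (n+1), S.card := by
          apply Finset.sum_congr rfl
          intro k _
          exact hinner k
    _ = (n+1) * S.card := by rw [Finset.sum_const, Finset.card_range, smul_eq_mul]
  have hcard : Fintype.card (Fin n → ZMod 2) = 2^n := by
    rw [Fintype.card_fun, ZMod.card, Fintype.card_fin]
  have hlt : ∑ t : (Fin n → ZMod 2), 2^n * ((Finset.range (n+1)).filter
      (fun k => chainPt n k + t ∈ S)).card
      < ∑ _t : (Fin n → ZMod 2), (n+1) * S.card := by
    apply Finset.sum_lt_sum_of_nonempty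
    · exact Finset.univ_nonempty
    · intro t _
      exact hcon t
  rw [← Finset.mul_sum, hsum, Finset.sum_const, smul_eq_mul, Finset.card_univ, hcard] at hlt
  exact lt_irrefl _ hlt

/-- there is an absolute constant `c > 0` such that for every `n`,
every `0 < α ≤ 1` and every `S ⊆ 𝔽₂ⁿ` with `|S| ≥ α 2ⁿ`, the set `S` contains a
rainbow subset `R` with `|R| ≥ c √(α n)`. -/
theorem stmt19 :
    ∃ c : ℝ, 0 < c ∧ ∀ n : ℕ, ∀ α : ℝ, 0 < α → α ≤ 1 →
      ∀ S : Finset (Fin n → ZMod 2), α * 2 ^ n ≤ (S.card : ℝ) →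
        ∃ R ⊆ S, IsRainbow R ∧ c * Real.sqrt (α * n) ≤ (R.card : ℝ) := by
  classical
  refine ⟨1/14000, by norm_num, ?_⟩
  intro n α hα0 hα1 S hS
  obtain ⟨t, havg⟩ := chain_avg n S
  set A := (Finset.range (n+1)).filter (fun k => chainPt n k + t ∈ S) with hAdef
  obtain ⟨Z, hZA, hsidon, hZbound⟩ := kss A
  have hZn : ∀ k ∈ Z, k ≤ n := by
    intro k hk
    have h := hZA hk
    rw [hAdef, Finset.mem_filter, Finset.mem_range] at h
    omega
  have hZS : ∀ k ∈ Z, chainPt n k + t ∈ S := by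
    intro k hk
    have h := hZA hk
    rw [hAdef, Finset.mem_filter] at h
    exact h.2
  set R := Z.image (fun k => chainPt n k + t) with hRdef
  have hRS : R ⊆ S := by
    intro x hx
    rw [hRdef, Finset.mem_image] at hx
    obtain ⟨k, hk, rfl⟩ := hx
    exact hZS k hk
  have hRcard : R.card = Z.card := by
    rw [hRdef]
    apply Finset.card_image_of_injOn
    intro k hk l hl heq
    exact chainPt_inj n k l (hZn k hk) (hZn l hl) (add_right_cancel heq)
  refine ⟨R, hRS, ?_, ?_⟩
  · -- rainbow
    intro x hx y hy u hu v hv hxy huv hdisteq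
    rw [hRdef, Finset.mem_image] at hx hy hu hv
    obtain ⟨k, hkZ, rfl⟩ := hx
    obtain ⟨l, hlZ, rfl⟩ := hy
    obtain ⟨a, haZ, rfl⟩ := hu
    obtain ⟨b, hbZ, rfl⟩ := hv
    have hkl : k ≠ l := fun h => hxy (by rw [h])
    have hab : a ≠ b := fun h => huv (by rw [h])
    have hd : ∀ i j : ℕ, i ∈ Z → j ∈ Z → i ≤ j →
        hammingDist (chainPt n i + t) (chainPt n j + t) = j - i := by
      intro i j hi hj hij
      rw [hamming_translate, chain_dist n i j hij (hZn j hj)]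
    rcases le_total k l with h1 | h1 <;> rcases le_total a b with h2 | h2
    · rw [hd k l hkZ hlZ h1, hd a b haZ hbZ h2] at hdisteq
      have hsum : k + b = l + a := by omega
      rcases hsidon k hkZ l hlZ a haZ b hbZ hsum with h | ⟨hka, hlb⟩
      · exact absurd h hkl
      · rw [hka, hlb]
    · rw [hd k l hkZ hlZ h1, hammingDist_comm (chainPt n a + t), hd b a hbZ haZ h2] at hdisteq
      have hsum : k + a = l + b := by omega
      rcases hsidon k hkZ l hlZ b hbZ a haZ hsum with h | ⟨hkb, hla⟩
      · exact absurd h hkl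
      · rw [hkb, hla]
        exact Finset.pair_comm _ _
    · rw [hammingDist_comm (chainPt n k + t), hd l k hlZ hkZ h1, hd a b haZ hbZ h2] at hdisteq
      have hsum : l + b = k + a := by omega
      rcases hsidon l hlZ k hkZ a haZ b hbZ hsum with h | ⟨hla, hkb⟩
      · exact absurd h (Ne.symm hkl)
      · rw [hla, hkb]
        exact Finset.pair_comm _ _
    · rw [hammingDist_comm (chainPt n k + t), hd l k hlZ hkZ h1,
        hammingDist_comm (chainPt n a + t), hd b a hbZ haZ h2] at hdisteq
      have hsum : l + a = k + b := by omega
      rcases hsidon l hlZ k hkZ b hbZ a haZ hsum with h | ⟨hlb, hka⟩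
      · exact absurd h (Ne.symm hkl)
      · rw [hlb, hka]
  · -- size
    have h3 : (0:ℝ) < 2^n := by positivity
    have hm : α * (n+1) ≤ (A.card : ℝ) := by
      have h1' : ((n+1):ℝ) * S.card ≤ (2^n : ℝ) * A.card := by exact_mod_cast havg
      have h4 : α * (n+1) * 2^n ≤ ((n+1):ℝ) * S.card := by
        have h5 : α * 2^n ≤ (S.card:ℝ) := hS
        have h6 : (0:ℝ) ≤ ((n+1):ℝ) := by positivity
        calc α * (n+1) * 2^n = ((n+1):ℝ) * (α * 2^n) := by ring
        _ ≤ ((n+1):ℝ) * S.card := by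
              exact mul_le_mul_of_nonneg_left h5 h6
      have h7 : α * (n+1) * 2^n ≤ ((A.card:ℝ)) * 2^n := by
        calc α * (n+1) * 2^n ≤ ((n+1):ℝ) * S.card := h4
        _ ≤ (2^n : ℝ) * A.card := h1'
        _ = ((A.card:ℝ)) * 2^n := by ring
      exact le_of_mul_le_mul_right h7 h3
    have hsq : Real.sqrt (α * n) ≤ Real.sqrt (A.card) := by
      apply Real.sqrt_le_sqrt
      have h8 : α * n ≤ α * (n+1) := by nlinarith
      linarith
    rw [hRcard]
    calc (1/14000) * Real.sqrt (α * n) ≤ (1/14000) * (14000 * Z.card) := by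
          apply mul_le_mul_of_nonneg_left _ (by norm_num)
          exact le_trans hsq hZbound
    _ = Z.card := by ring
end
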